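/- arXiv:1902.10346 — 6 statements merged into one kernel-verified Lean document; each statement's English description precedes it below -/
import Mathlib

section
/- For α > -1, the function f(σ) = ∫₀^∞ e^{-σ(cosh θ - 1)} (sinh θ)^α dθ satisfies f(σ) = 2^{(α-1)/2} Γ((α+1)/2) σ^{-(α+1)/2} (1 + O(1/σ)) as σ → ∞. -/
open Real MeasureTheory Set Filter


-- integrability of x^s * exp(-b x)
lemma aux_int1 {s b : ℝ} (hs : -1 < s) (hb : 0 < b) :
    IntegrableOn (fun x : ℝ => x ^ s * Real.exp (-b * x)) (Ioi 0) := by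
  simpa [Real.rpow_one] using integrableOn_rpow_mul_exp_neg_mul_rpow hs one_pos hb

-- e^x - 1 ≤ x e^x
lemma aux_exp_sub_one (x : ℝ) (hx : 0 ≤ x) : Real.exp x - 1 ≤ x * Real.exp x := by
  have h1 := Real.add_one_le_exp (-x)
  have h2 := Real.exp_pos x
  have h3 : Real.exp (-x) * Real.exp x = 1 := by
    rw [← Real.exp_add]; simp
  nlinarith

-- (1+v)^β ≤ exp(β v) for β ≥ 0, v ≥ 0
lemma aux_rpow_le_exp {β v : ℝ} (hβ : 0 ≤ β) (hv : 0 ≤ v) :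
    (1 + v) ^ β ≤ Real.exp (β * v) := by
  have h1 : (1 + v : ℝ) ≤ Real.exp v := by
    simpa [add_comm] using Real.add_one_le_exp v
  calc (1 + v) ^ β ≤ (Real.exp v) ^ β :=
        Real.rpow_le_rpow (by linarith) h1 hβ
    _ = Real.exp (β * v) := by
        rw [← Real.exp_one_rpow v, ← Real.rpow_mul (Real.exp_pos 1).le, Real.exp_one_rpow,
          mul_comm]

-- |(1+v)^β - 1| ≤ |β| v exp(|β| v)
lemma aux_core (β : ℝ) {v : ℝ} (hv : 0 ≤ v) :
    |(1 + v) ^ β - 1| ≤ |β| * v * Real.exp (|β| * v) := by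
  have key : ∀ γ : ℝ, 0 ≤ γ → (1 + v) ^ γ - 1 ≤ γ * v * Real.exp (γ * v) := by
    intro γ hγ
    have h1 := aux_rpow_le_exp hγ hv
    have h2 := aux_exp_sub_one (γ * v) (by positivity)
    nlinarith [Real.exp_pos (γ * v)]
  rcases le_or_gt 0 β with hβ | hβ
  · rw [abs_of_nonneg hβ, abs_of_nonneg]
    · exact key β hβ
    · have : (1:ℝ) ≤ (1 + v) ^ β := Real.one_le_rpow (by linarith) hβ
      linarith
  · have hb' : 0 ≤ -β := by linarith
    have hpos : 0 < (1 + v) ^ β := Real.rpow_pos_of_pos (by linarith) β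
    have hinv : (1 + v) ^ (-β) = ((1 + v) ^ β)⁻¹ := Real.rpow_neg (by linarith) β
    have hle1 : (1 + v) ^ β ≤ 1 := by
      exact Real.rpow_le_one_of_one_le_of_nonpos (by linarith) hβ.le
    have h2 := key (-β) hb'
    rw [hinv] at h2
    rw [abs_of_neg hβ] at *
    rw [abs_of_nonpos (by linarith)]
    -- 1 - a ≤ a⁻¹ - 1 since a ≤ 1, times ... : 1 - a ≤ a⁻¹ - 1 ⟸ a + a⁻¹ ≥ 2
    have h3 : (1 + v) ^ β * ((1 + v) ^ β)⁻¹ = 1 := mul_inv_cancel₀ hpos.ne'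
    nlinarith [sq_nonneg ((1 + v) ^ β - 1)]


-- from a.lean (assumed): aux_core, aux_rpow_le_exp, aux_int1
-- (u+2)^β ≤ 2^β exp(|β| u) for u ≥ 0
lemma aux_twob (β : ℝ) {u : ℝ} (hu : 0 ≤ u) :
    (u + 2) ^ β ≤ 2 ^ β * Real.exp (|β| * u) := by
  have h2 : u + 2 = 2 * (1 + u / 2) := by ring
  rw [h2, Real.mul_rpow (by norm_num) (by linarith)]
  gcongr
  rcases le_or_gt 0 β with hβ | hβ
  · calc (1 + u / 2) ^ β ≤ Real.exp (β * (u / 2)) := aux_rpow_le_exp hβ (by linarith)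
      _ ≤ Real.exp (|β| * u) := by
        apply Real.exp_le_exp.mpr
        rw [abs_of_nonneg hβ]; nlinarith
  · calc (1 + u / 2) ^ β ≤ 1 :=
        Real.rpow_le_one_of_one_le_of_nonpos (by linarith) hβ.le
      _ ≤ Real.exp (|β| * u) := Real.one_le_exp (by positivity)

-- continuity of the u-side integrand
lemma aux_contg (σ β : ℝ) :
    ContinuousOn (fun u : ℝ => Real.exp (-σ * u) * (u * (u + 2)) ^ β) (Ioi 0) := by
  apply ContinuousOn.mul
  · exact (Real.continuous_exp.comp (continuous_const.mul continuous_id)).continuousOn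
  · apply ContinuousOn.rpow_const
    · fun_prop
    · intro x hx
      left
      have : (0:ℝ) < x := hx
      positivity

-- integrability of g on Ioi 0, σ ≥ |β|+1, β > -1
lemma aux_intg {σ β : ℝ} (hβ : -1 < β) (hσ : |β| + 1 ≤ σ) :
    IntegrableOn (fun u : ℝ => Real.exp (-σ * u) * (u * (u + 2)) ^ β) (Ioi 0) := by
  have hmaj : IntegrableOn (fun u : ℝ => 2 ^ β * (u ^ β * Real.exp (-1 * u))) (Ioi 0) :=
    (aux_int1 hβ one_pos).const_mul _
  refine hmaj.mono' ((aux_contg σ β).aestronglyMeasurable measurableSet_Ioi) ?_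
  filter_upwards [ae_restrict_mem measurableSet_Ioi] with u hu
  have hu0 : (0:ℝ) < u := hu
  have h1 : (u * (u + 2)) ^ β = u ^ β * (u + 2) ^ β :=
    Real.mul_rpow hu0.le (by linarith)
  rw [Real.norm_eq_abs, abs_of_nonneg (by positivity), h1]
  have h2 := aux_twob β hu0.le
  calc Real.exp (-σ * u) * (u ^ β * (u + 2) ^ β)
      ≤ Real.exp (-σ * u) * (u ^ β * (2 ^ β * Real.exp (|β| * u))) := by
        gcongr
    _ = 2 ^ β * (u ^ β * (Real.exp (-σ * u) * Real.exp (|β| * u))) := by ring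
    _ ≤ 2 ^ β * (u ^ β * Real.exp (-1 * u)) := by
        gcongr
        rw [← Real.exp_add, Real.exp_le_exp]
        nlinarith

-- pointwise error bound
lemma aux_pterr {σ β : ℝ} (hσ : |β| ≤ σ) {u : ℝ} (hu : 0 < u) :
    |Real.exp (-σ * u) * (u * (u + 2)) ^ β - Real.exp (-σ * u) * (2 * u) ^ β|
      ≤ (|β| * 2 ^ (β - 1)) * (u ^ (β + 1) * Real.exp (-(σ / 2) * u)) := by
  have h1 : (u * (u + 2)) ^ β = u ^ β * (u + 2) ^ β := Real.mul_rpow hu.le (by linarith)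
  have h2 : ((2:ℝ) * u) ^ β = u ^ β * 2 ^ β := by
    rw [Real.mul_rpow (by norm_num) hu.le, mul_comm]
  have h3 : (u + 2 : ℝ) = 2 * (1 + u / 2) := by ring
  have h4 : (u + 2) ^ β = 2 ^ β * (1 + u / 2) ^ β := by
    rw [h3, Real.mul_rpow (by norm_num) (by linarith)]
  have key : |Real.exp (-σ * u) * (u * (u + 2)) ^ β - Real.exp (-σ * u) * (2 * u) ^ β|
      = Real.exp (-σ * u) * u ^ β * 2 ^ β * |(1 + u / 2) ^ β - 1| := by
    rw [h1, h2, h4]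
    rw [show Real.exp (-σ * u) * (u ^ β * (2 ^ β * (1 + u / 2) ^ β))
        - Real.exp (-σ * u) * (u ^ β * 2 ^ β)
        = (Real.exp (-σ * u) * u ^ β * 2 ^ β) * ((1 + u / 2) ^ β - 1) by ring]
    rw [abs_mul, abs_of_nonneg (by positivity)]
  rw [key]
  have hcore := aux_core β (v := u / 2) (by linarith)
  calc Real.exp (-σ * u) * u ^ β * 2 ^ β * |(1 + u / 2) ^ β - 1|
      ≤ Real.exp (-σ * u) * u ^ β * 2 ^ β * (|β| * (u / 2) * Real.exp (|β| * (u / 2))) := by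
        gcongr
    _ = (|β| * 2 ^ (β - 1)) * ((u ^ β * u) * (Real.exp (-σ * u) * Real.exp (|β| * (u / 2)))) := by
        rw [show (2:ℝ) ^ (β - 1) = 2 ^ β / 2 by
          rw [Real.rpow_sub (by norm_num), Real.rpow_one]]
        ring
    _ ≤ (|β| * 2 ^ (β - 1)) * (u ^ (β + 1) * Real.exp (-(σ / 2) * u)) := by
        rw [← Real.rpow_add_one hu.ne' β, ← Real.exp_add]
        gcongr
        have habs : 0 ≤ |β| := abs_nonneg β
        nlinarith


-- pointwise identity
lemma aux_pt {α σ θ : ℝ} (hθ : 0 < θ) :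
    Real.exp (-σ * (Real.cosh θ - 1)) * Real.sinh θ ^ α
      = (Real.exp (-σ * (Real.cosh θ - 1))
          * ((Real.cosh θ - 1) * ((Real.cosh θ - 1) + 2)) ^ ((α - 1) / 2)) * Real.sinh θ := by
  have hs : 0 < Real.sinh θ := Real.sinh_pos_iff.mpr hθ
  have h1 : (Real.cosh θ - 1) * ((Real.cosh θ - 1) + 2) = Real.sinh θ ^ (2:ℕ) := by
    have := Real.cosh_sq_sub_sinh_sq θ
    ring_nf
    nlinarith [Real.cosh_sq_sub_sinh_sq θ]
  rw [h1]
  have h2 : (Real.sinh θ ^ (2:ℕ)) ^ ((α - 1)/2) = Real.sinh θ ^ (α - 1) := by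
    rw [← Real.rpow_natCast (Real.sinh θ) 2, ← Real.rpow_mul hs.le]
    congr 1
    push_cast
    ring
  rw [h2, mul_assoc, ← Real.rpow_add_one hs.ne' (α - 1)]
  ring_nf
lemma aux_le_cosh (x : ℝ) : x ≤ Real.cosh x := by
  rcases le_or_gt x 1 with h | h
  · exact h.trans (Real.one_le_cosh x)
  · have h2 : x < Real.sinh x := Real.self_lt_sinh_iff.mpr (by linarith)
    have h3 : Real.sinh x < Real.cosh x := Real.sinh_lt_cosh x
    linarith

-- θ-side continuity
lemma aux_contθ (σ α : ℝ) :
    ContinuousOn (fun θ : ℝ => Real.exp (-σ * (Real.cosh θ - 1)) * Real.sinh θ ^ α)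
      (Ioi 0) := by
  apply ContinuousOn.mul
  · fun_prop
  · apply ContinuousOn.rpow_const (Real.continuous_sinh.continuousOn)
    intro x hx
    exact Or.inl (Real.sinh_pos_iff.mpr hx).ne'

-- θ-side integrability
lemma aux_intθ {α σ : ℝ} (hα : -1 < α) (hσ : 2 * |α| + 2 ≤ σ) :
    IntegrableOn (fun θ : ℝ => Real.exp (-σ * (Real.cosh θ - 1)) * Real.sinh θ ^ α)
      (Ioi 0) := by
  have hσ0 : 0 < σ := lt_of_lt_of_le (by positivity) hσ
  rw [← Ioc_union_Ioi_eq_Ioi (by norm_num : (0:ℝ) ≤ 2), integrableOn_union]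
  constructor
  · -- on Ioc 0 2
    have hmeas : AEStronglyMeasurable
        (fun θ : ℝ => Real.exp (-σ * (Real.cosh θ - 1)) * Real.sinh θ ^ α)
        (volume.restrict (Ioc 0 2)) :=
      ((aux_contθ σ α).mono Ioc_subset_Ioi_self).aestronglyMeasurable measurableSet_Ioc
    have hexple : ∀ θ : ℝ, Real.exp (-σ * (Real.cosh θ - 1)) ≤ 1 := by
      intro θ
      rw [Real.exp_le_one_iff]
      nlinarith [Real.one_le_cosh θ]
    rcases le_or_gt 0 α with h0 | h0
    · -- bounded by constant
      refine ((integrableOn_const_iff (C := Real.sinh 2 ^ α)).mpr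
        (Or.inr measure_Ioc_lt_top)).mono' hmeas ?_
      filter_upwards [ae_restrict_mem measurableSet_Ioc] with θ hθ
      have hs : 0 < Real.sinh θ := Real.sinh_pos_iff.mpr hθ.1
      rw [Real.norm_eq_abs, abs_of_nonneg (by positivity)]
      calc Real.exp (-σ * (Real.cosh θ - 1)) * Real.sinh θ ^ α
          ≤ 1 * Real.sinh 2 ^ α :=
            mul_le_mul (hexple θ)
              (Real.rpow_le_rpow hs.le (Real.sinh_le_sinh.mpr hθ.2) h0)
              (Real.rpow_nonneg hs.le α) zero_le_one
        _ = Real.sinh 2 ^ α := one_mul _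
    · -- bounded by θ ^ α
      have hint : IntegrableOn (fun θ : ℝ => θ ^ α) (Ioc 0 2) := by
        have := intervalIntegral.intervalIntegrable_rpow' (a := 0) (b := 2) hα
        rwa [intervalIntegrable_iff_integrableOn_Ioc_of_le (by norm_num)] at this
      refine hint.mono' hmeas ?_
      filter_upwards [ae_restrict_mem measurableSet_Ioc] with θ hθ
      have hs : 0 < Real.sinh θ := Real.sinh_pos_iff.mpr hθ.1
      rw [Real.norm_eq_abs, abs_of_nonneg (by positivity)]
      calc Real.exp (-σ * (Real.cosh θ - 1)) * Real.sinh θ ^ α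
          ≤ 1 * Real.sinh θ ^ α :=
            mul_le_mul (hexple θ) le_rfl (Real.rpow_nonneg hs.le α) zero_le_one
        _ = Real.sinh θ ^ α := one_mul _
        _ ≤ θ ^ α := by
          apply Real.rpow_le_rpow_of_nonpos hθ.1 _ h0.le
          linarith [Real.self_lt_sinh_iff.mpr hθ.1]
  · -- on Ioi 2
    have hmeas : AEStronglyMeasurable
        (fun θ : ℝ => Real.exp (-σ * (Real.cosh θ - 1)) * Real.sinh θ ^ α)
        (volume.restrict (Ioi 2)) :=
      ((aux_contθ σ α).mono (fun x hx => lt_trans (by norm_num) hx)).aestronglyMeasurable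
        measurableSet_Ioi
    refine (exp_neg_integrableOn_Ioi 2 one_pos).mono' hmeas ?_
    filter_upwards [ae_restrict_mem measurableSet_Ioi] with θ hθ
    have hθ2 : (2:ℝ) < θ := hθ
    have hs : 0 < Real.sinh θ := Real.sinh_pos_iff.mpr (by linarith)
    rw [Real.norm_eq_abs, abs_of_nonneg (by positivity)]
    have hcosh : θ - 1 ≤ Real.cosh θ - 1 := by linarith [aux_le_cosh θ]
    have hhalf : θ / 2 ≤ θ - 1 := by linarith
    have hsinh_le : Real.sinh θ ^ α ≤ Real.exp (|α| * θ) := by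
      rcases le_or_gt 0 α with h0 | h0
      · calc Real.sinh θ ^ α ≤ (Real.exp θ) ^ α := by
              apply Real.rpow_le_rpow hs.le _ h0
              nlinarith [Real.cosh_sub_sinh θ, Real.exp_pos (-θ), Real.cosh_eq θ,
                Real.exp_pos θ]
          _ = Real.exp (θ * α) := by
              rw [← Real.exp_one_rpow θ, ← Real.rpow_mul (Real.exp_pos 1).le,
                Real.exp_one_rpow]
          _ ≤ Real.exp (|α| * θ) := by
              apply Real.exp_le_exp.mpr
              rw [abs_of_nonneg h0]; nlinarith
      · have h1 : (1:ℝ) ≤ Real.sinh θ := by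
          have := Real.self_lt_sinh_iff.mpr (show (0:ℝ) < θ by linarith)
          linarith
        calc Real.sinh θ ^ α ≤ 1 :=
              Real.rpow_le_one_of_one_le_of_nonpos h1 h0.le
          _ ≤ Real.exp (|α| * θ) := Real.one_le_exp (by positivity)
    calc Real.exp (-σ * (Real.cosh θ - 1)) * Real.sinh θ ^ α
        ≤ Real.exp (-σ * (θ / 2)) * Real.exp (|α| * θ) :=
          mul_le_mul (Real.exp_le_exp.mpr (by nlinarith)) hsinh_le
            (Real.rpow_nonneg hs.le α) (Real.exp_pos _).le
      _ = Real.exp (-σ * (θ / 2) + |α| * θ) := (Real.exp_add _ _).symm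
      _ ≤ Real.exp (-1 * θ) := by
          apply Real.exp_le_exp.mpr
          nlinarith [abs_nonneg α]


lemma aux_subst {α σ : ℝ} (hα : -1 < α) (hβσ : |(α - 1) / 2| + 1 ≤ σ)
    (hασ : 2 * |α| + 2 ≤ σ) :
    (∫ θ in Ioi (0:ℝ), Real.exp (-σ * (Real.cosh θ - 1)) * Real.sinh θ ^ α)
      = ∫ u in Ioi (0:ℝ), Real.exp (-σ * u) * (u * (u + 2)) ^ ((α - 1) / 2) := by
  set β := (α - 1) / 2 with hβdef
  have hβ : -1 < β := by rw [hβdef]; linarith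
  set g : ℝ → ℝ := fun u => Real.exp (-σ * u) * (u * (u + 2)) ^ β with hgdef
  have himg1 : (fun θ => Real.cosh θ - 1) '' Ioi 0 ⊆ Ioi 0 := by
    rintro x ⟨θ, hθ, rfl⟩
    have h1 : (1:ℝ) < Real.cosh θ := Real.one_lt_cosh.mpr (ne_of_gt hθ)
    simpa using h1
  have himg2 : (fun θ => Real.cosh θ - 1) '' Ici 0 ⊆ Ici 0 := by
    rintro x ⟨θ, _, rfl⟩
    simpa using Real.one_le_cosh θ
  have hg_int : IntegrableOn g (Ioi 0) := aux_intg hβ hβσ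
  have h0 : Real.cosh 0 - 1 = 0 := by simp
  have key := integral_comp_mul_deriv_Ioi
      (f := fun θ => Real.cosh θ - 1) (f' := Real.sinh) (g := g) (a := 0)
      ((Real.continuous_cosh.sub continuous_const).continuousOn)
      ?_ ?_ ?_ ?_ ?_
  · simp only [Real.cosh_zero, sub_self] at key
    rw [← key]
    refine setIntegral_congr_fun measurableSet_Ioi (fun θ hθ => ?_)
    exact aux_pt hθ
  · -- tendsto atTop
    apply tendsto_atTop_mono (fun θ => by linarith [aux_le_cosh θ] :
      ∀ θ : ℝ, θ - 1 ≤ Real.cosh θ - 1)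
    exact tendsto_atTop_add_const_right _ (-1) tendsto_id
  · exact fun x _ => ((Real.hasDerivAt_cosh x).sub_const 1).hasDerivWithinAt
  · exact (aux_contg σ β).mono himg1
  · exact (Iff.mpr integrableOn_Ici_iff_integrableOn_Ioi hg_int).mono_set himg2
  · rw [integrableOn_Ici_iff_integrableOn_Ioi]
    exact (aux_intθ hα hασ).congr_fun (fun θ hθ => aux_pt hθ) measurableSet_Ioi


theorem stmt0 (α : ℝ) (hα : -1 < α) (f : ℝ → ℝ)
    (hf : ∀ σ : ℝ, f σ =
      ∫ θ in Ioi (0:ℝ), Real.exp (-σ * (Real.cosh θ - 1)) * Real.sinh θ ^ α) :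
    ∃ C σ₀ : ℝ, 0 < C ∧ 0 < σ₀ ∧ ∀ σ : ℝ, σ₀ ≤ σ →
      |f σ * σ ^ ((α + 1) / 2) / ((2:ℝ) ^ ((α - 1) / 2) * Real.Gamma ((α + 1) / 2)) - 1|
        ≤ C / σ := by
  set β : ℝ := (α - 1) / 2 with hβdef
  have hβ : -1 < β := by rw [hβdef]; linarith
  have hp : (0:ℝ) < β + 1 := by linarith
  have hpα : (α + 1) / 2 = β + 1 := by rw [hβdef]; ring
  set c : ℝ := (2:ℝ) ^ β * Real.Gamma (β + 1) with hcdef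
  have hc : 0 < c := by
    have := Real.Gamma_pos_of_pos hp
    positivity
  set K : ℝ := (|β| * 2 ^ (β - 1)) * Real.Gamma (β + 2) with hKdef
  have hK : 0 ≤ K := by
    have := Real.Gamma_pos_of_pos (show (0:ℝ) < β + 2 by linarith)
    positivity
  refine ⟨K * 2 ^ (β + 2) / c + 1, 2 * |α| + 2 * |β| + 4, by positivity, by positivity,
    fun σ hσ => ?_⟩
  have habsα : 0 ≤ |α| := abs_nonneg α
  have habsβ : 0 ≤ |β| := abs_nonneg β
  have hσ0 : (0:ℝ) < σ := by nlinarith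
  have hσβ1 : |β| + 1 ≤ σ := by nlinarith
  have hσα : 2 * |α| + 2 ≤ σ := by nlinarith
  -- the two u-side functions
  set g : ℝ → ℝ := fun u => Real.exp (-σ * u) * (u * (u + 2)) ^ β with hgdef
  set h : ℝ → ℝ := fun u => Real.exp (-σ * u) * (2 * u) ^ β with hhdef
  have hg_int : IntegrableOn g (Ioi 0) := aux_intg hβ hσβ1
  have hh_int : IntegrableOn h (Ioi 0) := by
    have base : IntegrableOn (fun x : ℝ => (2:ℝ) ^ β * (x ^ β * Real.exp (-σ * x)))
        (Ioi 0) := (aux_int1 hβ hσ0).const_mul _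
    refine base.congr_fun (fun u hu => ?_) measurableSet_Ioi
    have hu : (0:ℝ) < u := hu
    rw [hhdef]
    simp only
    rw [Real.mul_rpow (by norm_num) hu.le]
    ring
  -- value of ∫ h
  have hmain : ∫ u in Ioi (0:ℝ), h u = c * (1 / σ) ^ (β + 1) := by
    have e1 : ∀ u ∈ Ioi (0:ℝ), h u = (2:ℝ) ^ β * (u ^ (β + 1 - 1) * Real.exp (-(σ * u))) := by
      intro u hu
      have hu : (0:ℝ) < u := hu
      rw [hhdef]
      simp only
      rw [Real.mul_rpow (by norm_num) hu.le]
      ring_nf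
    rw [setIntegral_congr_fun measurableSet_Ioi e1, integral_const_mul,
      Real.integral_rpow_mul_exp_neg_mul_Ioi hp hσ0]
    rw [hcdef]; ring
  -- error bound
  have herr : |(∫ u in Ioi (0:ℝ), g u) - ∫ u in Ioi (0:ℝ), h u| ≤ K * (2 / σ) ^ (β + 2) := by
    rw [← integral_sub hg_int hh_int]
    have hbound_int : IntegrableOn
        (fun u : ℝ => (|β| * 2 ^ (β - 1)) * (u ^ (β + 1) * Real.exp (-(σ / 2) * u)))
        (Ioi 0) :=
      (aux_int1 (by linarith : (-1:ℝ) < β + 1) (by positivity)).const_mul _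
    calc |∫ u in Ioi (0:ℝ), (g u - h u)|
        ≤ ∫ u in Ioi (0:ℝ), |g u - h u| := by
          simpa [Real.norm_eq_abs] using
            norm_integral_le_integral_norm (μ := volume.restrict (Ioi 0))
              (fun u => g u - h u)
      _ ≤ ∫ u in Ioi (0:ℝ),
            (|β| * 2 ^ (β - 1)) * (u ^ (β + 1) * Real.exp (-(σ / 2) * u)) := by
          refine setIntegral_mono_on ((hg_int.sub hh_int).abs) hbound_int
            measurableSet_Ioi (fun u hu => ?_)
          exact aux_pterr (by nlinarith) hu
      _ = K * (2 / σ) ^ (β + 2) := by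
          have e2 : ∀ u ∈ Ioi (0:ℝ),
              (|β| * 2 ^ (β - 1)) * (u ^ (β + 1) * Real.exp (-(σ / 2) * u))
                = (|β| * 2 ^ (β - 1)) * (u ^ (β + 2 - 1) * Real.exp (-(σ / 2 * u))) := by
            intro u _
            ring_nf
          rw [setIntegral_congr_fun measurableSet_Ioi e2, integral_const_mul,
            Real.integral_rpow_mul_exp_neg_mul_Ioi (by linarith : (0:ℝ) < β + 2)
              (by positivity)]
          rw [one_div_div, hKdef]
          ring
  -- assemble
  have hfσ : f σ = ∫ u in Ioi (0:ℝ), g u := by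
    rw [hf σ]
    exact aux_subst hα (by rw [← hβdef]; nlinarith) hσα
  have hσp : (0:ℝ) < σ ^ (β + 1) := Real.rpow_pos_of_pos hσ0 _
  have hone : (1 / σ) ^ (β + 1) * σ ^ (β + 1) = 1 := by
    rw [← Real.mul_rpow (by positivity) hσ0.le, one_div_mul_cancel hσ0.ne', Real.one_rpow]
  set IG := ∫ u in Ioi (0:ℝ), g u with hIG
  set IH := ∫ u in Ioi (0:ℝ), h u with hIH
  have hkey : f σ * σ ^ ((α + 1) / 2) / ((2:ℝ) ^ β * Real.Gamma ((α + 1) / 2)) - 1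
      = (IG - IH) * σ ^ (β + 1) / c := by
    rw [hpα, hfσ, hmain, ← hcdef]
    field_simp
    linear_combination ((2:ℝ) ^ β * Real.Gamma (β + 1)) * hone
  rw [hkey, abs_div, abs_of_pos hc, abs_mul, abs_of_pos hσp]
  rw [div_le_div_iff₀ hc hσ0]
  calc |IG - IH| * σ ^ (β + 1) * σ
      ≤ (K * (2 / σ) ^ (β + 2)) * σ ^ (β + 1) * σ := by gcongr
    _ = K * 2 ^ (β + 2) := by
        rw [Real.div_rpow (by norm_num) hσ0.le,
          show β + 2 = (β + 1) + 1 by ring, Real.rpow_add_one hσ0.ne']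
        field_simp
    _ ≤ (K * 2 ^ (β + 2) / c + 1) * c := by
        have h2 : (0:ℝ) < 2 ^ (β + 2) := by positivity
        rw [add_mul, div_mul_cancel₀ _ hc.ne']
        nlinarith
end

section
/- For α > -1, the function g(σ) = ∫₀^π e^{-σ(1 - cos θ)} (sin θ)^α dθ satisfies g(σ) = 2^{(α-1)/2} Γ((α+1)/2) σ^{-(α+1)/2} (1 + O(1/σ)) as σ → ∞. -/
open Real MeasureTheory Set Filter


lemma img_cos : (fun θ : ℝ => 1 - Real.cos θ) '' Ioo 0 π = Ioo (0:ℝ) 2 := by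
  ext t
  constructor
  · rintro ⟨θ, ⟨h0, hπ⟩, rfl⟩
    have h1 : Real.cos θ < Real.cos 0 :=
      Real.cos_lt_cos_of_nonneg_of_le_pi le_rfl hπ.le h0
    have h2 : Real.cos π < Real.cos θ :=
      Real.cos_lt_cos_of_nonneg_of_le_pi h0.le le_rfl hπ
    rw [Real.cos_zero] at h1; rw [Real.cos_pi] at h2
    exact ⟨by simp; linarith, by simp; linarith⟩
  · rintro ⟨h0, h2⟩
    have hm : (-1:ℝ) ≤ 1 - t := by linarith
    have hM : (1:ℝ) - t ≤ 1 := by linarith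
    have hc := Real.cos_arccos hm hM
    refine ⟨Real.arccos (1 - t), ⟨Real.arccos_pos.mpr (by linarith), ?_⟩, by simp [hc]⟩
    rcases lt_or_eq_of_le (Real.arccos_le_pi (1 - t)) with h | h
    · exact h
    · exfalso; rw [h, Real.cos_pi] at hc; linarith

lemma injOn_sub_cos : InjOn (fun θ : ℝ => 1 - Real.cos θ) (Ioo 0 π) := by
  intro a ha b hb hab
  have : Real.cos a = Real.cos b := by simpa using hab
  exact Real.injOn_cos (Ioo_subset_Icc_self ha) (Ioo_subset_Icc_self hb) this

lemma subst (α σ : ℝ) :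
    (∫ θ in (0:ℝ)..π, Real.exp (-σ * (1 - Real.cos θ)) * Real.sin θ ^ α)
      = ∫ t in Ioo (0:ℝ) 2, Real.exp (-σ * t) * (t * (2 - t)) ^ ((α - 1)/2) := by
  rw [intervalIntegral.integral_of_le Real.pi_pos.le, integral_Ioc_eq_integral_Ioo,
    ← img_cos, integral_image_eq_integral_abs_deriv_smul measurableSet_Ioo
      (fun x _ => ((Real.hasDerivAt_cos x).const_sub 1).hasDerivWithinAt) injOn_sub_cos]
  refine setIntegral_congr_fun measurableSet_Ioo (fun θ hθ => ?_)
  have hs : 0 < Real.sin θ := Real.sin_pos_of_pos_of_lt_pi hθ.1 hθ.2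
  have hsq : (1 - Real.cos θ) * (2 - (1 - Real.cos θ)) = Real.sin θ ^ 2 := by
    have := Real.sin_sq_add_cos_sq θ; ring_nf; nlinarith [Real.sin_sq_add_cos_sq θ]
  simp only [smul_eq_mul, neg_neg, abs_of_pos hs]
  rw [hsq]
  have h1 : (Real.sin θ ^ 2 : ℝ) ^ ((α - 1)/2) = Real.sin θ ^ (α - 1) := by
    rw [← Real.rpow_natCast (Real.sin θ) 2, ← Real.rpow_mul hs.le]
    norm_num
    ring_nf
  rw [h1]
  have h2 : Real.sin θ * Real.sin θ ^ (α - 1) = Real.sin θ ^ α := by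
    nth_rewrite 1 [← Real.rpow_one (Real.sin θ)]
    rw [← Real.rpow_add hs]
    ring_nf
  rw [← h2]; ring

lemma rpow_le_two_pow_abs {u b : ℝ} (h1 : 1 ≤ u) (h2 : u ≤ 2) : u ^ b ≤ 2 ^ |b| := by
  rcases le_or_gt 0 b with hb | hb
  · calc u ^ b ≤ 2 ^ b := Real.rpow_le_rpow (by linarith) h2 hb
    _ ≤ 2 ^ |b| := Real.rpow_le_rpow_of_exponent_le one_le_two (le_abs_self b)
  · calc u ^ b ≤ 1 := Real.rpow_le_one_of_one_le_of_nonpos h1 hb.le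
    _ ≤ 2 ^ |b| := Real.one_le_rpow one_le_two (abs_nonneg b)

lemma int_rpow_exp {s σ : ℝ} (hs : -1 < s) (hσ : 0 < σ) :
    IntegrableOn (fun t : ℝ => t ^ s * Real.exp (-σ * t)) (Ioi 0) := by
  have := integrableOn_rpow_mul_exp_neg_mul_rpow hs one_pos hσ
  refine this.congr_fun (fun x hx => ?_) measurableSet_Ioi
  simp only [Real.rpow_one]

lemma main_term {b σ : ℝ} (hb : -1 < b) (hσ : 0 < σ) :
    ∫ t in Ioi (0:ℝ), Real.exp (-σ * t) * (2*t) ^ b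
      = 2 ^ b * Real.Gamma (b+1) * σ ^ (-(b+1)) := by
  have h1 : ∀ t ∈ Ioi (0:ℝ), Real.exp (-σ * t) * (2*t) ^ b
      = 2 ^ b * (t ^ ((b+1)-1) * Real.exp (-(σ * t))) := by
    intro t ht
    rw [Real.mul_rpow (by norm_num) (le_of_lt ht)]
    ring_nf
  rw [setIntegral_congr_fun measurableSet_Ioi h1, integral_const_mul,
    Real.integral_rpow_mul_exp_neg_mul_Ioi (by linarith) hσ]
  rw [one_div, ← Real.rpow_neg_one σ, ← Real.rpow_mul hσ.le]
  ring_nf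

lemma int_sing {b : ℝ} (hb : -1 < b) :
    IntegrableOn (fun t : ℝ => (t*(2-t)) ^ b) (Ioo 0 2) := by
  have ht : IntegrableOn (fun t : ℝ => t ^ b) (Ioo 0 2) :=
    ((intervalIntegral.intervalIntegrable_rpow' hb (a := 0) (b := 2)).1.mono_set
      Ioo_subset_Ioc_self)
  have ht2 : IntegrableOn (fun t : ℝ => (2 - t) ^ b) (Ioo 0 2) := by
    have := ((intervalIntegral.intervalIntegrable_rpow' hb (a := 0) (b := 2)).comp_sub_left 2)
    simp only [sub_zero, sub_self] at this
    exact (this.symm.1.mono_set Ioo_subset_Ioc_self)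
  refine ((ht.add ht2).const_mul ((2:ℝ) ^ |b|)).mono' ?_ ?_
  · exact ((measurable_id.mul (measurable_const.sub measurable_id)).pow
      measurable_const).aestronglyMeasurable
  · rw [ae_restrict_iff' measurableSet_Ioo]
    refine Eventually.of_forall (fun t ht => ?_)
    obtain ⟨h0, h2⟩ := ht
    simp only [Pi.add_apply]
    have hmul : (t*(2-t)) ^ b = t ^ b * (2-t) ^ b :=
      Real.mul_rpow h0.le (by linarith)
    have htb : (0:ℝ) ≤ t ^ b := Real.rpow_nonneg h0.le b
    have ht2b : (0:ℝ) ≤ (2-t) ^ b := Real.rpow_nonneg (by linarith) b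
    rw [Real.norm_eq_abs, abs_of_nonneg (by rw [hmul]; positivity), hmul]
    have h2abs : (1:ℝ) ≤ 2 ^ |b| := Real.one_le_rpow one_le_two (abs_nonneg b)
    rcases le_total t 1 with h | h
    · have hle : (2-t) ^ b ≤ 2 ^ |b| := rpow_le_two_pow_abs (by linarith) (by linarith)
      nlinarith
    · have hle : t ^ b ≤ 2 ^ |b| := rpow_le_two_pow_abs (by linarith) (by linarith)
      nlinarith

lemma lip_bound (b : ℝ) : ∀ u ∈ Icc (0:ℝ) (1/2),
    |(1-u) ^ b - 1| ≤ (|b| * (1 + 2 ^ (1-b))) * u := by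
  intro u hu
  set K := |b| * (1 + 2 ^ (1-b)) with hK
  have hderiv : ∀ x ∈ Icc (0:ℝ) (1/2),
      HasDerivWithinAt (fun v : ℝ => (1-v) ^ b) (b * (1-x) ^ (b-1) * (-1)) (Icc 0 (1/2)) x := by
    intro x hx
    have hne : (1:ℝ) - x ≠ 0 := by obtain ⟨h1, h2⟩ := hx; intro h; linarith [h]
    have h1 : HasDerivAt (fun v : ℝ => 1 - v) (-1) x := (hasDerivAt_id x).const_sub 1
    exact ((Real.hasDerivAt_rpow_const (Or.inl hne)).comp x h1).hasDerivWithinAt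
  have hbound : ∀ x ∈ Icc (0:ℝ) (1/2), ‖b * (1-x) ^ (b-1) * (-1)‖ ≤ K := by
    intro x hx
    obtain ⟨h1, h2⟩ := hx
    have hpos : (0:ℝ) < 1 - x := by linarith
    rw [norm_eq_abs, abs_mul, abs_neg, abs_one, mul_one, abs_mul,
      abs_of_nonneg (Real.rpow_nonneg hpos.le _)]
    have key : (1-x) ^ (b-1) ≤ 1 + 2 ^ (1-b) := by
      rcases le_or_gt 0 (b-1) with h | h
      · have := Real.rpow_le_one hpos.le (by linarith : (1:ℝ) - x ≤ 1) h
        have h2b : (0:ℝ) ≤ 2 ^ (1-b) := Real.rpow_nonneg (by norm_num) _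
        linarith
      · have h1x : (1:ℝ)/2 ≤ 1 - x := by linarith
        have := Real.rpow_le_rpow_of_nonpos (by norm_num : (0:ℝ) < 1/2) h1x h.le
        have heq : ((1:ℝ)/2) ^ (b-1) = 2 ^ (1-b) := by
          rw [one_div, ← Real.rpow_neg_one (2:ℝ), ← Real.rpow_mul (by norm_num : (0:ℝ) ≤ 2)]
          ring_nf
        rw [heq] at this
        linarith
    calc |b| * (1-x) ^ (b-1) ≤ |b| * (1 + 2 ^ (1-b)) :=
          mul_le_mul_of_nonneg_left key (abs_nonneg b)
      _ = K := rfl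
  have := (convex_Icc (0:ℝ) (1/2)).norm_image_sub_le_of_norm_hasDerivWithin_le
    hderiv hbound (left_mem_Icc.mpr (by norm_num)) hu
  simp only [sub_zero, Real.rpow_zero] at this
  calc |(1-u) ^ b - 1| = ‖(1-u) ^ b - 1‖ := (norm_eq_abs _).symm
    _ ≤ K * ‖u - 0‖ := by simpa using this
    _ = K * u := by rw [sub_zero, norm_eq_abs, abs_of_nonneg hu.1]

-- integrability of the three pieces
lemma int_rpow_exp' {s σ : ℝ} (hs : -1 < s) (hσ : 0 < σ) :
    IntegrableOn (fun t : ℝ => t ^ s * Real.exp (-σ * t)) (Ioi 0) := by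
  have := integrableOn_rpow_mul_exp_neg_mul_rpow hs one_pos hσ
  exact this.congr_fun (fun x hx => by simp only [Real.rpow_one]) measurableSet_Ioi

lemma int_m {b σ : ℝ} (hb : -1 < b) (hσ : 0 < σ) :
    IntegrableOn (fun t : ℝ => Real.exp (-σ * t) * (2*t) ^ b) (Ioi 0) := by
  have h : IntegrableOn (fun t : ℝ => (2:ℝ) ^ b * (t ^ b * Real.exp (-σ * t))) (Ioi 0) :=
    (int_rpow_exp' hb hσ).const_mul ((2:ℝ) ^ b)
  exact h.congr_fun (fun x hx => by
    rw [Real.mul_rpow (by norm_num) (le_of_lt hx)]; ring) measurableSet_Ioi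


set_option maxHeartbeats 2000000 in
theorem stmt1 (α : ℝ) (hα : -1 < α) (g : ℝ → ℝ)
    (hg : ∀ σ : ℝ, g σ =
      ∫ θ in (0:ℝ)..Real.pi, Real.exp (-σ * (1 - Real.cos θ)) * Real.sin θ ^ α) :
    ∃ C σ₀ : ℝ, 0 < C ∧ 0 < σ₀ ∧ ∀ σ : ℝ, σ₀ ≤ σ →
      |g σ * σ ^ ((α + 1) / 2) / ((2:ℝ) ^ ((α - 1) / 2) * Real.Gamma ((α + 1) / 2)) - 1|
        ≤ C / σ := by
  have hb : -1 < (α - 1)/2 := by linarith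
  set b := (α - 1)/2 with hbdef
  have hb1 : (0:ℝ) < b + 1 := by linarith
  have hb2 : (0:ℝ) < b + 2 := by linarith
  set K := |b| * (1 + 2 ^ (1-b)) with hKdef
  have hK0 : (0:ℝ) ≤ K := by positivity
  set C1 := K/2 * 2 ^ b * Real.Gamma (b+2) with hC1def
  have hC10 : (0:ℝ) ≤ C1 := by
    have := Real.Gamma_pos_of_pos hb2
    positivity
  set C2 := ∫ t in Ico (1:ℝ) 2, ((t*(2-t)) ^ b + (2*t) ^ b) with hC2def
  have hC20 : (0:ℝ) ≤ C2 := by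
    refine setIntegral_nonneg measurableSet_Ico (fun t ht => ?_)
    have h1 : (0:ℝ) ≤ t*(2-t) := by nlinarith [ht.1, ht.2]
    have h2 : (0:ℝ) ≤ 2*t := by nlinarith [ht.1]
    exact add_nonneg (Real.rpow_nonneg h1 b) (Real.rpow_nonneg h2 b)
  set C3 := ∫ t in Ici (2:ℝ), Real.exp (1-t) * (2*t) ^ b with hC3def
  have hC30 : (0:ℝ) ≤ C3 := by
    refine setIntegral_nonneg measurableSet_Ici (fun t ht => ?_)
    have h2 : (0:ℝ) ≤ 2*t := by simp at ht; nlinarith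
    positivity
  set D := 2 ^ b * Real.Gamma (b+1) with hDdef
  have hD0 : (0:ℝ) < D :=
    mul_pos (Real.rpow_pos_of_pos two_pos b) (Real.Gamma_pos_of_pos hb1)
  -- key error bound
  have key : ∀ σ : ℝ, 1 ≤ σ → |g σ - D * σ ^ (-(b+1))|
      ≤ C1 * σ ^ (-(b+2)) + (C2+C3) * Real.exp (-σ) := by
    intro σ hσ
    have hσ0 : (0:ℝ) < σ := lt_of_lt_of_le one_pos hσ
    have hgσ : g σ = ∫ t in Ioo (0:ℝ) 2, Real.exp (-σ*t) * (t*(2-t)) ^ b := by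
      rw [hg σ]; exact subst α σ
    have hM : (∫ t in Ioi (0:ℝ), Real.exp (-σ*t) * (2*t) ^ b) = D * σ ^ (-(b+1)) :=
      main_term hb hσ0
    have hmf : Measurable (fun t : ℝ => Real.exp (-σ*t) * (t*(2-t)) ^ b) :=
      (Real.measurable_exp.comp (measurable_id.const_mul (-σ))).mul
        ((measurable_id.mul (measurable_const.sub measurable_id)).pow measurable_const)
    have hif : IntegrableOn (fun t : ℝ => Real.exp (-σ*t) * (t*(2-t)) ^ b) (Ioo 0 2) := by
      refine (int_sing hb).mono' hmf.aestronglyMeasurable ?_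
      rw [ae_restrict_iff' measurableSet_Ioo]
      refine Eventually.of_forall (fun t ht => ?_)
      have hX : (0:ℝ) ≤ t*(2-t) := by nlinarith [ht.1, ht.2]
      rw [Real.norm_eq_abs, abs_mul, abs_of_pos (Real.exp_pos _),
        abs_of_nonneg (Real.rpow_nonneg hX b)]
      have he : Real.exp (-σ*t) ≤ 1 := by
        rw [Real.exp_le_one_iff]
        nlinarith [ht.1, hσ0.le]
      nlinarith [Real.rpow_nonneg hX b]
    have him : IntegrableOn (fun t : ℝ => Real.exp (-σ*t) * (2*t) ^ b) (Ioi 0) :=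
      int_m hb hσ0
    have him2 : IntegrableOn (fun t : ℝ => Real.exp (-σ*t) * (2*t) ^ b) (Ioo 0 2) :=
      him.mono_set Ioo_subset_Ioi_self
    have himI : IntegrableOn (fun t : ℝ => Real.exp (-σ*t) * (2*t) ^ b) (Ici 2) :=
      him.mono_set (fun x hx => mem_Ioi.mpr (lt_of_lt_of_le two_pos (mem_Ici.mp hx)))
    have hsub1 : Ioo (0:ℝ) 1 ⊆ Ioo 0 2 := Ioo_subset_Ioo_right one_le_two
    have hsub2 : Ico (1:ℝ) 2 ⊆ Ioo 0 2 := fun x hx => ⟨lt_of_lt_of_le one_pos hx.1, hx.2⟩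
    have hif1 := hif.mono_set hsub1
    have hif2 := hif.mono_set hsub2
    have him1 := him2.mono_set hsub1
    have him12 := him2.mono_set hsub2
    have hd1 : Disjoint (Ioo (0:ℝ) 1) (Ico 1 2) := by
      rw [Set.disjoint_left]; rintro x ⟨_, h1⟩ ⟨h2, _⟩; linarith
    have hd2 : Disjoint (Ioo (0:ℝ) 2) (Ici 2) := by
      rw [Set.disjoint_left]; rintro x ⟨_, h1⟩ h2; rw [mem_Ici] at h2; linarith
    have hsf : (∫ t in Ioo (0:ℝ) 2, Real.exp (-σ*t) * (t*(2-t)) ^ b)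
        = (∫ t in Ioo (0:ℝ) 1, Real.exp (-σ*t) * (t*(2-t)) ^ b)
          + ∫ t in Ico (1:ℝ) 2, Real.exp (-σ*t) * (t*(2-t)) ^ b := by
      rw [← Ioo_union_Ico_eq_Ioo (by norm_num : (0:ℝ) < 1) (by norm_num : (1:ℝ) ≤ 2)] at hif ⊢
      rw [setIntegral_union hd1 measurableSet_Ico hif1 hif2]
    have hsm : (∫ t in Ioi (0:ℝ), Real.exp (-σ*t) * (2*t) ^ b)
        = ((∫ t in Ioo (0:ℝ) 1, Real.exp (-σ*t) * (2*t) ^ b)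
          + ∫ t in Ico (1:ℝ) 2, Real.exp (-σ*t) * (2*t) ^ b)
          + ∫ t in Ici (2:ℝ), Real.exp (-σ*t) * (2*t) ^ b := by
      rw [← Ioo_union_Ici_eq_Ioi (by norm_num : (0:ℝ) < 2),
        setIntegral_union hd2 measurableSet_Ici him2 himI,
        ← Ioo_union_Ico_eq_Ioo (by norm_num : (0:ℝ) < 1) (by norm_num : (1:ℝ) ≤ 2),
        setIntegral_union hd1 measurableSet_Ico him1 him12]
    have hE : g σ - D * σ ^ (-(b+1)) =
        ((∫ t in Ioo (0:ℝ) 1, (Real.exp (-σ*t) * (t*(2-t)) ^ b - Real.exp (-σ*t) * (2*t) ^ b))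
          + ∫ t in Ico (1:ℝ) 2, (Real.exp (-σ*t) * (t*(2-t)) ^ b - Real.exp (-σ*t) * (2*t) ^ b))
          - ∫ t in Ici (2:ℝ), Real.exp (-σ*t) * (2*t) ^ b := by
      rw [integral_sub hif1 him1, integral_sub hif2 him12, hgσ, ← hM, hsf, hsm]; ring
    -- B1
    have hφint : IntegrableOn (fun t : ℝ => K/2 * 2^b * (t^(b+1) * Real.exp (-σ*t))) (Ioi 0) :=
      (int_rpow_exp' (by linarith : (-1:ℝ) < b+1) hσ0).const_mul _
    have B1 : ‖∫ t in Ioo (0:ℝ) 1,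
        (Real.exp (-σ*t) * (t*(2-t)) ^ b - Real.exp (-σ*t) * (2*t) ^ b)‖
        ≤ C1 * σ ^ (-(b+2)) := by
      have hφ1 : IntegrableOn (fun t : ℝ => K/2 * 2^b * (t^(b+1) * Real.exp (-σ*t)))
          (Ioo 0 1) := hφint.mono_set (fun x hx => hx.1)
      calc ‖∫ t in Ioo (0:ℝ) 1,
            (Real.exp (-σ*t) * (t*(2-t)) ^ b - Real.exp (-σ*t) * (2*t) ^ b)‖
          ≤ ∫ t in Ioo (0:ℝ) 1, K/2 * 2^b * (t^(b+1) * Real.exp (-σ*t)) := by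
            refine norm_integral_le_of_norm_le hφ1 ?_
            rw [ae_restrict_iff' measurableSet_Ioo]
            refine Eventually.of_forall (fun t ht => ?_)
            obtain ⟨h0, h1⟩ := ht
            have hfact : t*(2-t) = (2*t)*(1-t/2) := by ring
            have h2t : (0:ℝ) ≤ 2*t := by linarith
            have h1t : (0:ℝ) ≤ 1 - t/2 := by linarith
            have heq : Real.exp (-σ*t) * (t*(2-t)) ^ b - Real.exp (-σ*t) * (2*t) ^ b
                = Real.exp (-σ*t) * ((2*t)^b * ((1-t/2)^b - 1)) := by
              rw [hfact, Real.mul_rpow h2t h1t]; ring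
            rw [heq, Real.norm_eq_abs, abs_mul, abs_mul, abs_of_pos (Real.exp_pos _),
              abs_of_nonneg (Real.rpow_nonneg h2t b)]
            have hlip := lip_bound b (t/2) ⟨by linarith, by linarith⟩
            have h2tb : (2*t)^b = 2^b * t^b := Real.mul_rpow (by norm_num) h0.le
            have hts : t^(b+1) = t^b * t := Real.rpow_add_one h0.ne' b
            calc Real.exp (-σ*t) * ((2*t)^b * |(1-t/2)^b - 1|)
                ≤ Real.exp (-σ*t) * ((2*t)^b * (K * (t/2))) :=
                  mul_le_mul_of_nonneg_left
                    (mul_le_mul_of_nonneg_left hlip (Real.rpow_nonneg h2t b))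
                    (Real.exp_pos _).le
              _ = K/2 * 2^b * (t^(b+1) * Real.exp (-σ*t)) := by
                  rw [h2tb, hts]; ring
        _ ≤ ∫ t in Ioi (0:ℝ), K/2 * 2^b * (t^(b+1) * Real.exp (-σ*t)) := by
            refine setIntegral_mono_set hφint ?_
              (HasSubset.Subset.eventuallyLE (fun x (hx : x ∈ Ioo (0:ℝ) 1) => hx.1))
            refine (ae_restrict_iff' measurableSet_Ioi).mpr
              (Eventually.of_forall (fun t ht => ?_))
            simp only [Pi.zero_apply]
            have : (0:ℝ) ≤ t^(b+1) := Real.rpow_nonneg (le_of_lt ht) _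
            positivity
        _ = C1 * σ ^ (-(b+2)) := by
            rw [integral_const_mul]
            have hcongr : ∀ t ∈ Ioi (0:ℝ), t^(b+1) * Real.exp (-σ*t)
                = t^((b+2)-1) * Real.exp (-(σ*t)) := by
              intro t ht
              rw [show b+2-1 = b+1 by ring, neg_mul]
            rw [setIntegral_congr_fun measurableSet_Ioi hcongr,
              Real.integral_rpow_mul_exp_neg_mul_Ioi (by linarith : (0:ℝ) < b+2) hσ0,
              one_div, ← Real.rpow_neg_one σ, ← Real.rpow_mul hσ0.le, hC1def]
            ring_nf
    -- B2
    have hsum2 : IntegrableOn (fun t : ℝ => (t*(2-t))^b + (2*t)^b) (Ico 1 2) := by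
      have h1 : IntegrableOn (fun t : ℝ => (t*(2-t))^b) (Ico 1 2) :=
        (int_sing hb).mono_set hsub2
      have h2 : IntegrableOn (fun t : ℝ => (2*t)^b) (Ico 1 2) := by
        have hc : ContinuousOn (fun t : ℝ => (2*t)^b) (Icc 1 2) := by
          refine ContinuousOn.rpow_const
            ((continuous_const.mul continuous_id).continuousOn) (fun x hx => ?_)
          left; nlinarith [hx.1]
        exact hc.integrableOn_Icc.mono_set Ico_subset_Icc_self
      exact h1.add h2
    have B2 : ‖∫ t in Ico (1:ℝ) 2,
        (Real.exp (-σ*t) * (t*(2-t)) ^ b - Real.exp (-σ*t) * (2*t) ^ b)‖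
        ≤ Real.exp (-σ) * C2 := by
      have hgint : IntegrableOn
          (fun t : ℝ => Real.exp (-σ) * ((t*(2-t))^b + (2*t)^b)) (Ico 1 2) :=
        hsum2.const_mul _
      calc ‖∫ t in Ico (1:ℝ) 2,
            (Real.exp (-σ*t) * (t*(2-t)) ^ b - Real.exp (-σ*t) * (2*t) ^ b)‖
          ≤ ∫ t in Ico (1:ℝ) 2, Real.exp (-σ) * ((t*(2-t))^b + (2*t)^b) := by
            refine norm_integral_le_of_norm_le hgint ?_
            rw [ae_restrict_iff' measurableSet_Ico]
            refine Eventually.of_forall (fun t ht => ?_)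
            obtain ⟨h1, h2⟩ := ht
            have hX : (0:ℝ) ≤ t*(2-t) := by nlinarith
            have h2t : (0:ℝ) ≤ 2*t := by linarith
            have hee : Real.exp (-σ*t) ≤ Real.exp (-σ) := by
              rw [Real.exp_le_exp]; nlinarith
            have hXb := Real.rpow_nonneg hX b
            have hYb := Real.rpow_nonneg h2t b
            calc ‖Real.exp (-σ*t) * (t*(2-t)) ^ b - Real.exp (-σ*t) * (2*t) ^ b‖
                ≤ ‖Real.exp (-σ*t) * (t*(2-t)) ^ b‖ + ‖Real.exp (-σ*t) * (2*t) ^ b‖ :=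
                  norm_sub_le _ _
              _ = Real.exp (-σ*t) * (t*(2-t)) ^ b + Real.exp (-σ*t) * (2*t) ^ b := by
                  rw [Real.norm_eq_abs, Real.norm_eq_abs, abs_mul, abs_mul,
                    abs_of_pos (Real.exp_pos _), abs_of_nonneg hXb, abs_of_nonneg hYb]
              _ ≤ Real.exp (-σ) * (t*(2-t)) ^ b + Real.exp (-σ) * (2*t) ^ b := by
                  gcongr
              _ = Real.exp (-σ) * ((t*(2-t))^b + (2*t)^b) := by ring
        _ = Real.exp (-σ) * C2 := by rw [integral_const_mul, ← hC2def]
    -- B3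
    have hint3 : IntegrableOn (fun t : ℝ => Real.exp (1-t) * (2*t)^b) (Ici 2) := by
      have h' : IntegrableOn
          (fun t : ℝ => Real.exp 1 * (Real.exp (-1*t) * (2*t) ^ b)) (Ioi 0) :=
        (int_m hb one_pos).const_mul (Real.exp 1)
      refine (h'.congr_fun (fun x hx => ?_) measurableSet_Ioi).mono_set
        (fun x hx => mem_Ioi.mpr (lt_of_lt_of_le two_pos (mem_Ici.mp hx)))
      rw [← mul_assoc, ← Real.exp_add]
      ring_nf
    have B3 : ‖∫ t in Ici (2:ℝ), Real.exp (-σ*t) * (2*t) ^ b‖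
        ≤ Real.exp (-σ) * C3 := by
      have hgint : IntegrableOn
          (fun t : ℝ => Real.exp (-σ) * (Real.exp (1-t) * (2*t)^b)) (Ici 2) :=
        hint3.const_mul _
      calc ‖∫ t in Ici (2:ℝ), Real.exp (-σ*t) * (2*t) ^ b‖
          ≤ ∫ t in Ici (2:ℝ), Real.exp (-σ) * (Real.exp (1-t) * (2*t)^b) := by
            refine norm_integral_le_of_norm_le hgint ?_
            rw [ae_restrict_iff' measurableSet_Ici]
            refine Eventually.of_forall (fun t ht => ?_)
            rw [mem_Ici] at ht
            have h2t : (0:ℝ) ≤ 2*t := by linarith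
            have hYb := Real.rpow_nonneg h2t b
            have hee : Real.exp (-σ*t) ≤ Real.exp (-σ) * Real.exp (1-t) := by
              rw [← Real.exp_add, Real.exp_le_exp]; nlinarith
            rw [Real.norm_eq_abs, abs_mul, abs_of_pos (Real.exp_pos _),
              abs_of_nonneg hYb]
            calc Real.exp (-σ*t) * (2*t) ^ b
                ≤ (Real.exp (-σ) * Real.exp (1-t)) * (2*t) ^ b :=
                  mul_le_mul_of_nonneg_right hee hYb
              _ = Real.exp (-σ) * (Real.exp (1-t) * (2*t)^b) := by ring
        _ = Real.exp (-σ) * C3 := by rw [integral_const_mul, ← hC3def]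
    rw [hE]
    set A := ∫ t in Ioo (0:ℝ) 1,
      (Real.exp (-σ*t) * (t*(2-t)) ^ b - Real.exp (-σ*t) * (2*t) ^ b) with hA
    set B := ∫ t in Ico (1:ℝ) 2,
      (Real.exp (-σ*t) * (t*(2-t)) ^ b - Real.exp (-σ*t) * (2*t) ^ b) with hB
    set CT := ∫ t in Ici (2:ℝ), Real.exp (-σ*t) * (2*t) ^ b with hCT
    rw [Real.norm_eq_abs] at B1 B2 B3
    calc |A + B - CT| ≤ |A + B| + |CT| := by
          rw [sub_eq_add_neg]; exact (abs_add_le _ _).trans (by rw [abs_neg])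
      _ ≤ |A| + |B| + |CT| := by linarith [abs_add_le A B]
      _ ≤ C1 * σ ^ (-(b+2)) + Real.exp (-σ) * C2 + Real.exp (-σ) * C3 := by
          linarith
      _ = C1 * σ ^ (-(b+2)) + (C2+C3) * Real.exp (-σ) := by ring
  -- eventual bound on exp
  have hev : ∀ᶠ x : ℝ in atTop, x ^ (b+2) * Real.exp (-1*x) < 1 :=
    (tendsto_rpow_mul_exp_neg_mul_atTop_nhds_zero (b+2) 1 one_pos).eventually_lt_const
      (by norm_num)
  obtain ⟨σ₁, hσ₁⟩ := eventually_atTop.mp hev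
  refine ⟨(C1+C2+C3)/D + 1, max σ₁ 1, by positivity,
    lt_of_lt_of_le one_pos (le_max_right _ _), fun σ hσ => ?_⟩
  have hσ1 : 1 ≤ σ := le_trans (le_max_right σ₁ 1) hσ
  have hσ0 : (0:ℝ) < σ := lt_of_lt_of_le one_pos hσ1
  have hexp : Real.exp (-σ) ≤ σ ^ (-(b+2)) := by
    have h := hσ₁ σ (le_trans (le_max_left σ₁ 1) hσ)
    have hp : (0:ℝ) < σ ^ (b+2) := Real.rpow_pos_of_pos hσ0 _
    rw [neg_one_mul] at h
    rw [Real.rpow_neg hσ0.le]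
    calc Real.exp (-σ) = (σ^(b+2))⁻¹ * (σ^(b+2) * Real.exp (-σ)) := by field_simp
      _ ≤ (σ^(b+2))⁻¹ * 1 := mul_le_mul_of_nonneg_left h.le (inv_nonneg.2 hp.le)
      _ = (σ^(b+2))⁻¹ := mul_one _
  have hEbound : |g σ - D * σ ^ (-(b+1))| ≤ (C1 + (C2+C3)) * σ ^ (-(b+2)) := by
    calc |g σ - D * σ ^ (-(b+1))|
        ≤ C1 * σ ^ (-(b+2)) + (C2+C3) * Real.exp (-σ) := key σ hσ1
      _ ≤ C1 * σ ^ (-(b+2)) + (C2+C3) * σ ^ (-(b+2)) := by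
          have : (0:ℝ) ≤ C2 + C3 := add_nonneg hC20 hC30
          gcongr
      _ = (C1 + (C2+C3)) * σ ^ (-(b+2)) := by ring
  have hab1 : (α+1)/2 = b + 1 := by rw [hbdef]; ring
  rw [hab1, ← hDdef]
  have hone : σ ^ (-(b+1)) * σ ^ (b+1) = 1 := by
    rw [← Real.rpow_add hσ0, show -(b+1)+(b+1) = (0:ℝ) by ring, Real.rpow_zero]
  have hD' : D ≠ 0 := ne_of_gt hD0
  have expand : g σ * σ^(b+1) = (g σ - D * σ ^ (-(b+1)))*σ^(b+1)
      + D * (σ^(-(b+1))*σ^(b+1)) := by ring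
  have hEq : g σ * σ^(b+1)/D - 1 = (g σ - D * σ ^ (-(b+1))) * σ^(b+1)/D := by
    rw [div_sub' hD', expand, hone, mul_one]
    ring_nf
  rw [hEq]
  have hσm : σ^(-(b+2)) * σ^(b+1) = σ⁻¹ := by
    rw [← Real.rpow_add hσ0, show -(b+2)+(b+1) = (-1:ℝ) by ring, Real.rpow_neg_one]
  have hrp : (0:ℝ) ≤ σ^(b+1) := (Real.rpow_pos_of_pos hσ0 _).le
  calc |(g σ - D * σ ^ (-(b+1))) * σ^(b+1)/D|
      = |g σ - D * σ ^ (-(b+1))| * σ^(b+1)/D := by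
        rw [abs_div, abs_mul, abs_of_nonneg hrp, abs_of_pos hD0]
    _ ≤ ((C1 + (C2+C3)) * σ ^ (-(b+2))) * σ^(b+1)/D := by gcongr
    _ = (C1+C2+C3)/D * σ⁻¹ := by rw [mul_assoc, hσm]; ring
    _ ≤ ((C1+C2+C3)/D + 1) * σ⁻¹ := by
        have : (0:ℝ) ≤ σ⁻¹ := inv_nonneg.2 hσ0.le
        nlinarith
    _ = ((C1+C2+C3)/D + 1) / σ := (div_eq_mul_inv _ σ).symm
end

section
/- Let H = {x ∈ ℝ^N : x₁ > 0} and p' ≥ 1. Define Ψ(x,t) = √(p'/(4π)) ∫_{x₁/√t}^∞ e^{-p'σ²/4} dσ. Then for every δ > 0, 4t log Ψ(x,t) = -p' x₁² + O(t log t) as t → 0⁺, uniformly for 0 ≤ x₁ ≤ δ. -/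
open Real MeasureTheory Set Filter

lemma gauss_upper (b a : ℝ) (hb : 0 < b) (ha : 0 ≤ a) :
    ∫ σ in Ioi a, Real.exp (-b * σ ^ 2) ≤ Real.exp (-b * a ^ 2) * Real.sqrt (π / b) := by
  have hint := integrable_exp_neg_mul_sq hb
  have hint2 : Integrable (fun σ : ℝ => Real.exp (-b * a ^ 2) * Real.exp (-b * (σ - a) ^ 2)) :=
    (hint.comp_sub_right a).const_mul _
  calc ∫ σ in Ioi a, Real.exp (-b * σ ^ 2)
      ≤ ∫ σ in Ioi a, Real.exp (-b * a ^ 2) * Real.exp (-b * (σ - a) ^ 2) := by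
        refine setIntegral_mono_on hint.integrableOn hint2.integrableOn measurableSet_Ioi ?_
        intro σ hσ
        rw [← Real.exp_add]
        apply Real.exp_le_exp.2
        have h1 : a ≤ σ := le_of_lt hσ
        nlinarith [mul_nonneg (mul_nonneg hb.le ha) (sub_nonneg.2 h1)]
    _ ≤ ∫ σ : ℝ, Real.exp (-b * a ^ 2) * Real.exp (-b * (σ - a) ^ 2) := by
        refine setIntegral_le_integral hint2 ?_
        filter_upwards with σ; positivity
    _ = Real.exp (-b * a ^ 2) * Real.sqrt (π / b) := by
        rw [integral_const_mul, integral_sub_right_eq_self (fun σ => Real.exp (-b * σ ^ 2)) a,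
          integral_gaussian]

lemma gauss_lower (b a s : ℝ) (hb : 0 < b) (ha : 0 ≤ a) (hs : 0 < s) :
    s * Real.exp (-b * (a + s) ^ 2) ≤ ∫ σ in Ioi a, Real.exp (-b * σ ^ 2) := by
  have hint := integrable_exp_neg_mul_sq hb
  calc s * Real.exp (-b * (a + s) ^ 2)
      = ∫ _ in Ioc a (a + s), Real.exp (-b * (a + s) ^ 2) := by
        rw [setIntegral_const, measureReal_def, Real.volume_Ioc, smul_eq_mul]
        rw [ENNReal.toReal_ofReal (by linarith)]
        ring_nf
    _ ≤ ∫ σ in Ioc a (a + s), Real.exp (-b * σ ^ 2) := by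
        refine setIntegral_mono_on (integrableOn_const measure_Ioc_lt_top.ne)
          hint.integrableOn measurableSet_Ioc ?_
        intro σ hσ
        apply Real.exp_le_exp.2
        have h1 : a < σ := hσ.1
        have h2 : σ ≤ a + s := hσ.2
        have h3 : σ ^ 2 ≤ (a + s) ^ 2 := by nlinarith
        nlinarith [mul_le_mul_of_nonneg_left h3 hb.le]
    _ ≤ ∫ σ in Ioi a, Real.exp (-b * σ ^ 2) := by
        refine setIntegral_mono_set hint.integrableOn ?_ ?_
        · filter_upwards with σ; positivity
        · exact HasSubset.Subset.eventuallyLE Ioc_subset_Ioi_self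

set_option maxHeartbeats 1000000 in
theorem stmt6 (p' δ : ℝ) (hp' : 1 ≤ p') (hδ : 0 < δ) (Ψ : ℝ → ℝ → ℝ)
    (hΨ : ∀ x₁ t : ℝ, Ψ x₁ t = Real.sqrt (p' / (4 * Real.pi)) *
      ∫ σ in Ioi (x₁ / Real.sqrt t), Real.exp (-p' * σ ^ 2 / 4)) :
    ∃ C t₀ : ℝ, 0 < C ∧ 0 < t₀ ∧ ∀ x₁ t : ℝ, 0 ≤ x₁ → x₁ ≤ δ → 0 < t → t < t₀ →
      |4 * t * Real.log (Ψ x₁ t) + p' * x₁ ^ 2| ≤ C * t * |Real.log t| := by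
  have hp0 : (0:ℝ) < p' := by linarith
  have hπ : 0 < π := Real.pi_pos
  set c := Real.sqrt (p' / (4 * π)) with hc
  have hc0 : 0 < c := Real.sqrt_pos.2 (by positivity)
  refine ⟨4 * |Real.log c| + 2 + 2 * p' * δ + p', Real.exp (-1), by positivity,
    Real.exp_pos _, ?_⟩
  intro x₁ t hx0 hxδ ht htt
  set s := Real.sqrt t with hsdef
  have hs : 0 < s := Real.sqrt_pos.2 ht
  have hs2 : s ^ 2 = t := Real.sq_sqrt ht.le
  set a := x₁ / s with hadef
  have ha0 : 0 ≤ a := div_nonneg hx0 hs.le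
  have has : a * s = x₁ := div_mul_cancel₀ x₁ hs.ne'
  have hta : t * a ^ 2 = x₁ ^ 2 := by
    rw [hadef, div_pow, hs2, mul_comm]
    exact div_mul_cancel₀ _ ht.ne'
  have hb : (0:ℝ) < p' / 4 := by positivity
  have hfun : ∀ σ : ℝ, -p' * σ ^ 2 / 4 = -(p' / 4) * σ ^ 2 := fun σ => by ring
  have hΨ' : Ψ x₁ t = c * ∫ σ in Ioi a, Real.exp (-(p' / 4) * σ ^ 2) := by
    rw [hΨ x₁ t]; simp only [hfun]; rfl
  -- upper bound
  have hcs : c * Real.sqrt (π / (p' / 4)) = 1 := by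
    rw [hc, ← Real.sqrt_mul (by positivity)]
    rw [show p' / (4 * π) * (π / (p' / 4)) = 1 by field_simp]
    exact Real.sqrt_one
  have hub : Ψ x₁ t ≤ Real.exp (-(p' / 4) * a ^ 2) := by
    rw [hΨ']
    calc c * ∫ σ in Ioi a, Real.exp (-(p' / 4) * σ ^ 2)
        ≤ c * (Real.exp (-(p' / 4) * a ^ 2) * Real.sqrt (π / (p' / 4))) :=
          mul_le_mul_of_nonneg_left (gauss_upper _ a hb ha0) hc0.le
      _ = Real.exp (-(p' / 4) * a ^ 2) * (c * Real.sqrt (π / (p' / 4))) := by ring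
      _ = Real.exp (-(p' / 4) * a ^ 2) := by rw [hcs, mul_one]
  -- lower bound
  have hlb : c * (s * Real.exp (-(p' / 4) * (a + s) ^ 2)) ≤ Ψ x₁ t := by
    rw [hΨ']
    exact mul_le_mul_of_nonneg_left (gauss_lower _ a s hb ha0 hs) hc0.le
  have hΨpos : 0 < Ψ x₁ t := lt_of_lt_of_le (by positivity) hlb
  have hlog_ub : Real.log (Ψ x₁ t) ≤ -(p' / 4) * a ^ 2 :=
    (Real.log_le_iff_le_exp hΨpos).2 hub
  have hlog_lb : Real.log c + Real.log s + -(p' / 4) * (a + s) ^ 2 ≤ Real.log (Ψ x₁ t) := by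
    have h := Real.log_le_log (by positivity) hlb
    rw [Real.log_mul hc0.ne' (by positivity), Real.log_mul hs.ne' (Real.exp_ne_zero _),
      Real.log_exp] at h
    linarith
  have hlogs : Real.log s = Real.log t / 2 := Real.log_sqrt ht.le
  have hexpand : t * (a + s) ^ 2 = x₁ ^ 2 + 2 * x₁ * t + t ^ 2 := by
    calc t * (a + s) ^ 2 = t * a ^ 2 + 2 * (a * s) * t + t * s ^ 2 := by ring
      _ = x₁ ^ 2 + 2 * x₁ * t + t ^ 2 := by rw [hta, has, hs2]; ring
  -- E ≤ 0
  have hE0 : 4 * t * Real.log (Ψ x₁ t) + p' * x₁ ^ 2 ≤ 0 := by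
    have h := mul_le_mul_of_nonneg_left hlog_ub (by positivity : (0:ℝ) ≤ 4 * t)
    nlinarith [hta]
  -- E lower bound
  have hElow : 4 * t * Real.log c + 2 * t * Real.log t - 2 * p' * x₁ * t - p' * t ^ 2 ≤
      4 * t * Real.log (Ψ x₁ t) + p' * x₁ ^ 2 := by
    have h := mul_le_mul_of_nonneg_left hlog_lb (by positivity : (0:ℝ) ≤ 4 * t)
    rw [hlogs] at h
    nlinarith [hexpand]
  -- log t facts
  have hlt : Real.log t < -1 := by
    calc Real.log t < Real.log (Real.exp (-1)) := Real.log_lt_log ht htt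
      _ = -1 := Real.log_exp _
  have hL : |Real.log t| = -Real.log t := abs_of_neg (by linarith)
  have h1L : 1 ≤ -Real.log t := by linarith
  have ht1 : t ≤ 1 := by
    have h1 : Real.exp (-1) ≤ Real.exp 0 := Real.exp_le_exp.2 (by norm_num)
    rw [Real.exp_zero] at h1; linarith
  rw [abs_of_nonpos hE0, hL]
  have hclb := neg_abs_le (Real.log c)
  nlinarith [mul_le_mul_of_nonneg_left hclb (by positivity : (0:ℝ) ≤ 4 * t),
    mul_nonneg (mul_nonneg (abs_nonneg (Real.log c)) ht.le) (sub_nonneg.2 h1L),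
    mul_le_mul_of_nonneg_left hxδ (by positivity : (0:ℝ) ≤ 2 * p' * t),
    mul_nonneg (mul_nonneg (mul_nonneg hp0.le hδ.le) ht.le) (sub_nonneg.2 h1L),
    mul_nonneg (mul_nonneg hp0.le ht.le) (by linarith : (0:ℝ) ≤ -Real.log t - t)]
end

section
/- Let p ∈ (1,∞), N ≥ 2, and define u^ε on the closed ball B̄_R ⊂ ℝ^N by u^ε(x) = (∫₀^π e^{√(p') |x| cos θ / ε} (sin θ)^{(N-p)/(p-1)} dθ) / (∫₀^π e^{√(p') R cos θ / ε} (sin θ)^{(N-p)/(p-1)} dθ), where p' = p/(p-1). Then ε log u^ε(x) + √(p') (R − |x|) = O(ε log ε) uniformly on B̄_R as ε → 0⁺. -/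
open Real MeasureTheory Set Filter

open intervalIntegral

-- pointwise lower bound on [0, π/2]
lemma stmt8_sin_ge (α θ : ℝ) (h0 : 0 ≤ θ) (h2 : θ ≤ π / 2) :
    (2 / π) ^ |α| * θ ^ α ≤ Real.sin θ ^ α := by
  have hπ : (0:ℝ) < π := Real.pi_pos
  have h2π : (0:ℝ) < 2 / π := by positivity
  rcases eq_or_lt_of_le h0 with h | h
  · -- θ = 0
    subst h
    rcases eq_or_ne α 0 with hα | hα
    · simp [hα]
    · simp [Real.zero_rpow hα]
  rcases le_or_gt 0 α with hα | hα
  · have hstep : (2 / π) ^ |α| = (2 / π) ^ α := by rw [abs_of_nonneg hα]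
    have hsin : (2 / π) * θ ≤ Real.sin θ := Real.mul_le_sin h0 h2
    calc (2 / π) ^ |α| * θ ^ α = ((2 / π) * θ) ^ α := by
          rw [hstep, Real.mul_rpow h2π.le h.le]
      _ ≤ Real.sin θ ^ α := Real.rpow_le_rpow (by positivity) hsin hα
  · have hsinpos : 0 < Real.sin θ :=
      Real.sin_pos_of_pos_of_lt_pi h (by nlinarith)
    have hsinθ : Real.sin θ ≤ θ := Real.sin_le h0
    have key : θ ^ α ≤ Real.sin θ ^ α :=
      Real.rpow_le_rpow_of_nonpos hsinpos hsinθ hα.le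
    have hone : (2 / π) ^ |α| ≤ 1 :=
      Real.rpow_le_one h2π.le (by rw [div_le_one hπ]; linarith [Real.pi_gt_three]) (abs_nonneg α)
    have hθα : (0:ℝ) ≤ θ ^ α := Real.rpow_nonneg h.le α
    nlinarith

-- pointwise upper bound on (0, π]
lemma stmt8_sin_le (α θ : ℝ) (h0 : 0 < θ) (h2 : θ ≤ π) :
    Real.sin θ ^ α ≤ (π / 2) ^ |α| * (θ ^ α + (π - θ) ^ α) := by
  have hπ : (0:ℝ) < π := Real.pi_pos
  have hπ2 : (1:ℝ) ≤ π / 2 := by linarith [Real.pi_gt_three]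
  have hP : (1:ℝ) ≤ (π / 2) ^ |α| := Real.one_le_rpow hπ2 (abs_nonneg α)
  have hθα : (0:ℝ) ≤ θ ^ α := Real.rpow_nonneg h0.le α
  have hπθα : (0:ℝ) ≤ (π - θ) ^ α := Real.rpow_nonneg (by linarith) α
  rcases le_or_gt 0 α with hα | hα
  · -- α ≥ 0 : sin^α ≤ 1 ≤ RHS
    have h1 : Real.sin θ ^ α ≤ 1 :=
      Real.rpow_le_one (Real.sin_nonneg_of_nonneg_of_le_pi h0.le h2) (Real.sin_le_one θ) hα
    have hmax : (π / 2) ^ α ≤ θ ^ α + (π - θ) ^ α := by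
      rcases le_or_gt θ (π / 2) with hc | hc
      · have : (π / 2) ^ α ≤ (π - θ) ^ α := Real.rpow_le_rpow (by positivity) (by linarith) hα
        linarith
      · have : (π / 2) ^ α ≤ θ ^ α := Real.rpow_le_rpow (by positivity) (by linarith) hα
        linarith
    have hp2 : (1:ℝ) ≤ (π / 2) ^ α := Real.one_le_rpow hπ2 hα
    nlinarith
  · -- α < 0
    rcases eq_or_lt_of_le h2 with hθπ | hθπ
    · -- θ = π : sin θ = 0
      rw [hθπ, Real.sin_pi, Real.zero_rpow (by linarith : α ≠ 0)]
      have h1 : (0:ℝ) ≤ π ^ α := Real.rpow_nonneg hπ.le α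
      have h2' : (0:ℝ) ≤ (π - π) ^ α := Real.rpow_nonneg (by linarith) α
      nlinarith
    · set m := min θ (π - θ) with hm
      have hm0 : 0 < m := lt_min h0 (by linarith)
      have h2π : (0:ℝ) < 2 / π := by positivity
      have hsin : (2 / π) * m ≤ Real.sin θ := by
        rcases le_or_gt θ (π / 2) with hc | hc
        · have := Real.mul_le_sin h0.le hc
          have hmθ : m ≤ θ := min_le_left _ _
          nlinarith [mul_le_mul_of_nonneg_left hmθ h2π.le]
        · have h' : π - θ ≤ π / 2 := by linarith
          have := Real.mul_le_sin (by linarith : (0:ℝ) ≤ π - θ) h'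
          rw [show Real.sin θ = Real.sin (π - θ) by rw [Real.sin_pi_sub]]
          have hmθ : m ≤ π - θ := min_le_right _ _
          nlinarith [mul_le_mul_of_nonneg_left hmθ h2π.le]
      have hb : 0 < (2 / π) * m := by positivity
      have key : Real.sin θ ^ α ≤ ((2 / π) * m) ^ α :=
        Real.rpow_le_rpow_of_nonpos hb hsin hα.le
      have hsplit : ((2 / π) * m) ^ α = (2 / π) ^ α * m ^ α :=
        Real.mul_rpow (by positivity) hm0.le
      have habs : (2 / π) ^ α = (π / 2) ^ |α| := by
        rw [abs_of_neg hα, Real.rpow_neg (by positivity : (0:ℝ) ≤ π/2),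
          show (2:ℝ) / π = (π / 2)⁻¹ by rw [inv_div],
          Real.inv_rpow (by positivity : (0:ℝ) ≤ π/2)]
      have hmα : m ^ α ≤ θ ^ α + (π - θ) ^ α := by
        rcases min_cases θ (π - θ) with ⟨h', _⟩ | ⟨h', _⟩
        · rw [hm, h']; linarith
        · rw [hm, h']; linarith
      have hPnn : (0:ℝ) ≤ (π / 2) ^ |α| := by positivity
      calc Real.sin θ ^ α ≤ (2 / π) ^ α * m ^ α := by rw [← hsplit]; exact key
        _ = (π / 2) ^ |α| * m ^ α := by rw [habs]
        _ ≤ (π / 2) ^ |α| * (θ ^ α + (π - θ) ^ α) := by nlinarith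

lemma stmt8_integrable (α : ℝ) (hα : -1 < α) (c : ℝ) :
    IntervalIntegrable (fun θ => Real.exp (c * Real.cos θ) * Real.sin θ ^ α) volume 0 π := by
  have hπ : (0:ℝ) < π := Real.pi_pos
  -- dominating function
  have hg1 : IntervalIntegrable (fun θ : ℝ => θ ^ α) volume 0 π :=
    intervalIntegral.intervalIntegrable_rpow' hα
  have hg2 : IntervalIntegrable (fun θ : ℝ => (π - θ) ^ α) volume 0 π := by
    have := (intervalIntegral.intervalIntegrable_rpow' hα (a := 0) (b := π)).comp_sub_left π
    simpa using this.symm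
  have hg : IntervalIntegrable
      (fun θ : ℝ => Real.exp |c| * ((π / 2) ^ |α| * (θ ^ α + (π - θ) ^ α))) volume 0 π := by
    exact ((hg1.add hg2).const_mul ((π / 2) ^ |α|)).const_mul (Real.exp |c|)
  apply hg.mono_fun'
  · exact ((Real.measurable_cos.const_mul c).exp.mul
      (Real.measurable_sin.pow measurable_const)).aestronglyMeasurable
  · rw [Set.uIoc_of_le hπ.le]
    refine (ae_restrict_mem measurableSet_Ioc).mono fun θ hθ => ?_
    have hsin : 0 ≤ Real.sin θ := Real.sin_nonneg_of_nonneg_of_le_pi hθ.1.le hθ.2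
    have h1 : 0 ≤ Real.sin θ ^ α := Real.rpow_nonneg hsin α
    simp only [Real.norm_eq_abs]
    rw [abs_of_nonneg (mul_nonneg (Real.exp_pos _).le h1)]
    have hexp : Real.exp (c * Real.cos θ) ≤ Real.exp |c| := by
      apply Real.exp_le_exp.2
      calc c * Real.cos θ ≤ |c * Real.cos θ| := le_abs_self _
        _ = |c| * |Real.cos θ| := abs_mul _ _
        _ ≤ |c| * 1 := by
            have := Real.abs_cos_le_one θ
            nlinarith [abs_nonneg c]
        _ = |c| := mul_one _
    have hsinle := stmt8_sin_le α θ hθ.1 hθ.2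
    have h2 : 0 ≤ (π / 2) ^ |α| * (θ ^ α + (π - θ) ^ α) := le_trans h1 hsinle
    exact mul_le_mul hexp hsinle h1 (Real.exp_pos _).le

lemma stmt8_pos (α : ℝ) (hα : -1 < α) (c : ℝ) :
    0 < ∫ θ in (0:ℝ)..π, Real.exp (c * Real.cos θ) * Real.sin θ ^ α :=
  intervalIntegral.intervalIntegral_pos_of_pos_on (stmt8_integrable α hα c)
    (fun θ hθ => mul_pos (Real.exp_pos _)
      (Real.rpow_pos_of_pos (Real.sin_pos_of_pos_of_lt_pi hθ.1 hθ.2) α)) Real.pi_pos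

lemma stmt8_key (α : ℝ) (hα : -1 < α) (a ε : ℝ) (ha : 0 ≤ a) (hε : 0 < ε) (hε2 : ε ≤ π / 2) :
    a / ε - a * ε / 2 + (α + 1) * Real.log ε + Real.log ((2 / π) ^ |α| / (α + 1)) ≤
      Real.log (∫ θ in (0:ℝ)..π, Real.exp (a * Real.cos θ / ε) * Real.sin θ ^ α) ∧
    Real.log (∫ θ in (0:ℝ)..π, Real.exp (a * Real.cos θ / ε) * Real.sin θ ^ α) ≤
      a / ε + Real.log (∫ θ in (0:ℝ)..π, Real.sin θ ^ α) := by
  have hπ : (0:ℝ) < π := Real.pi_pos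
  have hεπ : ε ≤ π := le_trans hε2 (by linarith)
  have hα1 : 0 < α + 1 := by linarith
  have hfun : (fun θ => Real.exp (a * Real.cos θ / ε) * Real.sin θ ^ α)
      = fun θ => Real.exp (a / ε * Real.cos θ) * Real.sin θ ^ α := by
    funext θ; rw [show a * Real.cos θ / ε = a / ε * Real.cos θ by ring]
  have hJint : IntervalIntegrable
      (fun θ => Real.exp (a * Real.cos θ / ε) * Real.sin θ ^ α) volume 0 π := by
    rw [hfun]; exact stmt8_integrable α hα (a / ε)
  have hJpos : 0 < ∫ θ in (0:ℝ)..π, Real.exp (a * Real.cos θ / ε) * Real.sin θ ^ α := by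
    rw [hfun]; exact stmt8_pos α hα (a / ε)
  set J := ∫ θ in (0:ℝ)..π, Real.exp (a * Real.cos θ / ε) * Real.sin θ ^ α with hJ
  -- the constant C₁ = ∫ sin^α
  have hC1fun : (fun θ : ℝ => Real.sin θ ^ α)
      = fun θ => Real.exp (0 * Real.cos θ) * Real.sin θ ^ α := by
    funext θ; simp
  have hC1int : IntervalIntegrable (fun θ : ℝ => Real.sin θ ^ α) volume 0 π := by
    rw [hC1fun]; exact stmt8_integrable α hα 0
  have hC1pos : 0 < ∫ θ in (0:ℝ)..π, Real.sin θ ^ α := by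
    rw [hC1fun]; exact stmt8_pos α hα 0
  set C1 := ∫ θ in (0:ℝ)..π, Real.sin θ ^ α with hC1
  constructor
  · -- lower bound
    set K := Real.exp (a * Real.cos ε / ε) * ((2 / π) ^ |α| / (α + 1)) with hK
    -- step 1: lower bound of J by integral over [0, ε]
    have hsub1 : Set.uIoc (0:ℝ) ε ⊆ Set.uIoc (0:ℝ) π := by
      rw [Set.uIoc_of_le hε.le, Set.uIoc_of_le hπ.le]
      exact Set.Ioc_subset_Ioc le_rfl hεπ
    have hsub2 : Set.uIoc ε π ⊆ Set.uIoc (0:ℝ) π := by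
      rw [Set.uIoc_of_le hεπ, Set.uIoc_of_le hπ.le]
      exact Set.Ioc_subset_Ioc hε.le le_rfl
    have hsplit : J = (∫ θ in (0:ℝ)..ε, Real.exp (a * Real.cos θ / ε) * Real.sin θ ^ α)
        + ∫ θ in ε..π, Real.exp (a * Real.cos θ / ε) * Real.sin θ ^ α :=
      (intervalIntegral.integral_add_adjacent_intervals
        (hJint.mono_set' hsub1) (hJint.mono_set' hsub2)).symm
    have htail : 0 ≤ ∫ θ in ε..π, Real.exp (a * Real.cos θ / ε) * Real.sin θ ^ α := by
      apply intervalIntegral.integral_nonneg hεπ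
      intro θ hθ
      exact mul_nonneg (Real.exp_pos _).le
        (Real.rpow_nonneg (Real.sin_nonneg_of_nonneg_of_le_pi (le_trans hε.le hθ.1) hθ.2) α)
    -- step 2: lower bound the integral over [0, ε]
    have hlowint : IntervalIntegrable
        (fun θ : ℝ => (Real.exp (a * Real.cos ε / ε) * (2 / π) ^ |α|) * θ ^ α) volume 0 ε :=
      (intervalIntegral.intervalIntegrable_rpow' hα).const_mul _
    have hmono : (∫ θ in (0:ℝ)..ε, (Real.exp (a * Real.cos ε / ε) * (2 / π) ^ |α|) * θ ^ α)
        ≤ ∫ θ in (0:ℝ)..ε, Real.exp (a * Real.cos θ / ε) * Real.sin θ ^ α := by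
      apply intervalIntegral.integral_mono_on hε.le hlowint (hJint.mono_set' hsub1)
      intro θ hθ
      have hθ2 : θ ≤ π / 2 := le_trans hθ.2 hε2
      have hcos : Real.cos ε ≤ Real.cos θ :=
        Real.cos_le_cos_of_nonneg_of_le_pi hθ.1 hεπ hθ.2
      have hexp : Real.exp (a * Real.cos ε / ε) ≤ Real.exp (a * Real.cos θ / ε) :=
        Real.exp_le_exp.2 ((div_le_div_iff_of_pos_right hε).2 (mul_le_mul_of_nonneg_left hcos ha))
      have hsinge := stmt8_sin_ge α θ hθ.1 hθ2
      have h1 : 0 ≤ (2 / π) ^ |α| * θ ^ α :=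
        mul_nonneg (Real.rpow_nonneg (by positivity) _) (Real.rpow_nonneg hθ.1 _)
      calc (Real.exp (a * Real.cos ε / ε) * (2 / π) ^ |α|) * θ ^ α
          = Real.exp (a * Real.cos ε / ε) * ((2 / π) ^ |α| * θ ^ α) := by ring
        _ ≤ Real.exp (a * Real.cos θ / ε) * Real.sin θ ^ α :=
            mul_le_mul hexp hsinge h1 (Real.exp_pos _).le
    have hcomp : (∫ θ in (0:ℝ)..ε, (Real.exp (a * Real.cos ε / ε) * (2 / π) ^ |α|) * θ ^ α)
        = K * ε ^ (α + 1) := by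
      rw [intervalIntegral.integral_const_mul, integral_rpow (Or.inl hα),
        Real.zero_rpow (by linarith : α + 1 ≠ 0), hK]
      ring
    have hKpos : 0 < K * ε ^ (α + 1) := by
      apply mul_pos (mul_pos (Real.exp_pos _) _) (Real.rpow_pos_of_pos hε _)
      exact div_pos (Real.rpow_pos_of_pos (by positivity) _) hα1
    have hJge : K * ε ^ (α + 1) ≤ J := by
      rw [← hcomp, hsplit]; linarith
    have hlog : Real.log (K * ε ^ (α + 1)) ≤ Real.log J := Real.log_le_log hKpos hJge
    have hlogK : Real.log (K * ε ^ (α + 1)) = a * Real.cos ε / ε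
        + Real.log ((2 / π) ^ |α| / (α + 1)) + (α + 1) * Real.log ε := by
      rw [Real.log_mul (ne_of_gt (by positivity)) (ne_of_gt (Real.rpow_pos_of_pos hε _)),
        hK, Real.log_mul (Real.exp_ne_zero _)
          (ne_of_gt (div_pos (Real.rpow_pos_of_pos (by positivity) _) hα1)),
        Real.log_exp, Real.log_rpow hε]
    have hcosb : 1 - ε ^ 2 / 2 ≤ Real.cos ε := Real.one_sub_sq_div_two_le_cos
    have hfinal : a / ε - a * ε / 2 ≤ a * Real.cos ε / ε := by
      have h1 : a * (1 - ε ^ 2 / 2) ≤ a * Real.cos ε := mul_le_mul_of_nonneg_left hcosb ha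
      have h2 : a / ε - a * ε / 2 = a * (1 - ε ^ 2 / 2) / ε := by field_simp
      rw [h2]
      exact (div_le_div_iff_of_pos_right hε).2 h1
    linarith [hlog, hlogK ▸ hlog]
  · -- upper bound
    have hub : J ≤ Real.exp (a / ε) * C1 := by
      rw [hJ, hC1, ← intervalIntegral.integral_const_mul]
      apply intervalIntegral.integral_mono_on hπ.le hJint (hC1int.const_mul _)
      intro θ hθ
      have hsin : 0 ≤ Real.sin θ ^ α :=
        Real.rpow_nonneg (Real.sin_nonneg_of_nonneg_of_le_pi hθ.1 hθ.2) α
      have hexp : Real.exp (a * Real.cos θ / ε) ≤ Real.exp (a / ε) := by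
        apply Real.exp_le_exp.2
        exact (div_le_div_iff_of_pos_right hε).2 (mul_le_of_le_one_right ha (Real.cos_le_one θ))
      exact mul_le_mul_of_nonneg_right hexp hsin
    have := Real.log_le_log hJpos hub
    rwa [Real.log_mul (Real.exp_ne_zero _) (ne_of_gt hC1pos), Real.log_exp] at this

lemma stmt8_pos' (α : ℝ) (hα : -1 < α) (a ε : ℝ) :
    0 < ∫ θ in (0:ℝ)..π, Real.exp (a * Real.cos θ / ε) * Real.sin θ ^ α := by
  have hfun : (fun θ => Real.exp (a * Real.cos θ / ε) * Real.sin θ ^ α)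
      = fun θ => Real.exp (a / ε * Real.cos θ) * Real.sin θ ^ α := by
    funext θ; rw [show a * Real.cos θ / ε = a / ε * Real.cos θ by ring]
  rw [hfun]; exact stmt8_pos α hα (a / ε)


set_option maxHeartbeats 1000000 in
theorem stmt8 (N : ℕ) (hN : 2 ≤ N) (p R : ℝ) (hp : 1 < p) (hR : 0 < R)
    (p' : ℝ) (hp' : p' = p / (p - 1))
    (u : ℝ → EuclideanSpace ℝ (Fin N) → ℝ)
    (hu : ∀ (ε : ℝ) (x : EuclideanSpace ℝ (Fin N)), u ε x =
      (∫ θ in (0:ℝ)..Real.pi,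
          Real.exp (Real.sqrt p' * ‖x‖ * Real.cos θ / ε) *
            Real.sin θ ^ (((N : ℝ) - p) / (p - 1))) /
      (∫ θ in (0:ℝ)..Real.pi,
          Real.exp (Real.sqrt p' * R * Real.cos θ / ε) *
            Real.sin θ ^ (((N : ℝ) - p) / (p - 1)))) :
    ∃ C ε₀ : ℝ, 0 < C ∧ 0 < ε₀ ∧
      ∀ (ε : ℝ) (x : EuclideanSpace ℝ (Fin N)), 0 < ε → ε < ε₀ → ‖x‖ ≤ R →
        |ε * Real.log (u ε x) + Real.sqrt p' * (R - ‖x‖)| ≤ C * ε * |Real.log ε| := by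
  set α := ((N : ℝ) - p) / (p - 1) with hαdef
  have hp1 : (0:ℝ) < p - 1 := by linarith
  have hN2 : (2:ℝ) ≤ (N:ℝ) := by exact_mod_cast hN
  have hα : -1 < α := by
    rw [hαdef, lt_div_iff₀ hp1]; linarith
  have hα1 : 0 < α + 1 := by linarith
  set b := Real.sqrt p' with hb
  have hb0 : 0 ≤ b := Real.sqrt_nonneg _
  set L1 := Real.log (∫ θ in (0:ℝ)..π, Real.sin θ ^ α) with hL1
  set L2 := Real.log ((2 / π) ^ |α| / (α + 1)) with hL2
  refine ⟨|L1| + |L2| + b * R / 2 + (α + 1) + 1, Real.exp (-1), by positivity, Real.exp_pos _, ?_⟩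
  intro ε x hε hεε₀ hx
  have hε1 : ε < 1 := lt_trans hεε₀ (by
    have : Real.exp (-1) < Real.exp 0 := Real.exp_lt_exp.2 (by norm_num)
    simpa using this)
  have hεπ2 : ε ≤ π / 2 := by linarith [Real.pi_gt_three]
  have hlogε : Real.log ε < -1 := by
    have := Real.log_lt_log hε hεε₀
    rwa [Real.log_exp] at this
  have habslog : |Real.log ε| = -Real.log ε := abs_of_neg (by linarith)
  have hax : 0 ≤ b * ‖x‖ := mul_nonneg hb0 (norm_nonneg _)
  have haR : 0 ≤ b * R := mul_nonneg hb0 hR.le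
  have key_x := stmt8_key α hα (b * ‖x‖) ε hax hε hεπ2
  have key_R := stmt8_key α hα (b * R) ε haR hε hεπ2
  have hJx : 0 < ∫ θ in (0:ℝ)..π, Real.exp (b * ‖x‖ * Real.cos θ / ε) * Real.sin θ ^ α :=
    stmt8_pos' α hα (b * ‖x‖) ε
  have hJR : 0 < ∫ θ in (0:ℝ)..π, Real.exp (b * R * Real.cos θ / ε) * Real.sin θ ^ α :=
    stmt8_pos' α hα (b * R) ε
  set Lx := Real.log (∫ θ in (0:ℝ)..π, Real.exp (b * ‖x‖ * Real.cos θ / ε) * Real.sin θ ^ α)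
    with hLx
  set LR := Real.log (∫ θ in (0:ℝ)..π, Real.exp (b * R * Real.cos θ / ε) * Real.sin θ ^ α)
    with hLR
  have hulog : Real.log (u ε x) = Lx - LR := by
    rw [hu ε x, Real.log_div (ne_of_gt hJx) (ne_of_gt hJR)]
  -- ε-multiplied versions of the four key estimates
  have e1 : ε * Lx ≤ b * ‖x‖ + ε * L1 := by
    have h := mul_le_mul_of_nonneg_left key_x.2 hε.le
    have h2 : ε * (b * ‖x‖ / ε + L1) = b * ‖x‖ + ε * L1 := by field_simp
    rw [h2] at h; linarith
  have e4 : ε * LR ≤ b * R + ε * L1 := by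
    have h := mul_le_mul_of_nonneg_left key_R.2 hε.le
    have h2 : ε * (b * R / ε + L1) = b * R + ε * L1 := by field_simp
    rw [h2] at h; linarith
  have e2 : b * R - b * R * (ε * ε) / 2 + (α + 1) * (ε * Real.log ε) + ε * L2 ≤ ε * LR := by
    have h := mul_le_mul_of_nonneg_left key_R.1 hε.le
    have h2 : ε * (b * R / ε - b * R * ε / 2 + (α + 1) * Real.log ε + L2)
        = b * R - b * R * (ε * ε) / 2 + (α + 1) * (ε * Real.log ε) + ε * L2 := by
      field_simp
    rw [h2] at h; linarith
  have e3 : b * ‖x‖ - b * ‖x‖ * (ε * ε) / 2 + (α + 1) * (ε * Real.log ε) + ε * L2 ≤ ε * Lx := by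
    have h := mul_le_mul_of_nonneg_left key_x.1 hε.le
    have h2 : ε * (b * ‖x‖ / ε - b * ‖x‖ * ε / 2 + (α + 1) * Real.log ε + L2)
        = b * ‖x‖ - b * ‖x‖ * (ε * ε) / 2 + (α + 1) * (ε * Real.log ε) + ε * L2 := by
      field_simp
    rw [h2] at h; linarith
  -- elementary facts
  have hlam : 0 ≤ ε * (-Real.log ε) := mul_nonneg hε.le (by linarith)
  have h3 : ε ≤ ε * (-Real.log ε) := by
    have := mul_le_mul_of_nonneg_left (show (1:ℝ) ≤ -Real.log ε by linarith) hε.le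
    linarith
  have hee : ε * ε ≤ ε * (-Real.log ε) := by
    have := mul_le_mul_of_nonneg_left (show ε ≤ -Real.log ε by linarith) hε.le
    linarith
  have f1 : ε * L1 ≤ |L1| * (ε * (-Real.log ε)) := by
    have h1 := mul_le_mul_of_nonneg_left (le_abs_self L1) hε.le
    have h2 := mul_le_mul_of_nonneg_left h3 (abs_nonneg L1)
    linarith
  have f2 : -(ε * L2) ≤ |L2| * (ε * (-Real.log ε)) := by
    have h1 := mul_le_mul_of_nonneg_left (neg_abs_le L2) hε.le
    have h2 := mul_le_mul_of_nonneg_left h3 (abs_nonneg L2)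
    linarith
  have f3 : ε * L2 ≤ |L2| * (ε * (-Real.log ε)) := by
    have h1 := mul_le_mul_of_nonneg_left (le_abs_self L2) hε.le
    have h2 := mul_le_mul_of_nonneg_left h3 (abs_nonneg L2)
    linarith
  have f4 : -(ε * L1) ≤ |L1| * (ε * (-Real.log ε)) := by
    have h1 := mul_le_mul_of_nonneg_left (neg_abs_le L1) hε.le
    have h2 := mul_le_mul_of_nonneg_left h3 (abs_nonneg L1)
    linarith
  have g3 : b * R * (ε * ε) / 2 ≤ b * R / 2 * (ε * (-Real.log ε)) := by
    have := mul_le_mul_of_nonneg_left hee haR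
    linarith
  have hbxR : b * ‖x‖ ≤ b * R := mul_le_mul_of_nonneg_left hx hb0
  have g3' : b * ‖x‖ * (ε * ε) / 2 ≤ b * R / 2 * (ε * (-Real.log ε)) := by
    have := mul_le_mul hbxR hee (by positivity : (0:ℝ) ≤ ε * ε) haR
    linarith
  rw [hulog, habslog, abs_le]
  constructor
  · linarith [e3, e4, f1, f2, g3', hlam]
  · linarith [e1, e2, f1, f2, g3, hlam]
end

section
/- Let p' ≥ 1 and define u^ε on B̄_R ⊂ ℝ^N by u^ε(x) = cosh(|x|/ε)/cosh(R/ε). Then 0 ≤ ε log u^ε(x) + (R − |x|) ≤ ε log 2 for all x ∈ B̄_R and all ε > 0; in particular ε log u^ε + d_Γ = O(ε) uniformly on B̄_R. -/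
open Real MeasureTheory Set Filter

theorem stmt9 (N : ℕ) (hN : 2 ≤ N) (R p' : ℝ) (hR : 0 < R) (hp' : 1 ≤ p')
    (u : ℝ → EuclideanSpace ℝ (Fin N) → ℝ)
    (hu : ∀ (ε : ℝ) (x : EuclideanSpace ℝ (Fin N)),
      u ε x = Real.cosh (‖x‖ / ε) / Real.cosh (R / ε)) :
    ∀ (x : EuclideanSpace ℝ (Fin N)), ‖x‖ ≤ R → ∀ ε : ℝ, 0 < ε →
      0 ≤ ε * Real.log (u ε x) + (R - ‖x‖) ∧
      ε * Real.log (u ε x) + (R - ‖x‖) ≤ ε * Real.log 2 := by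
  intro x hx ε hε
  rw [hu]
  set a : ℝ := ‖x‖ / ε with ha_def
  set b : ℝ := R / ε with hb_def
  have ha : 0 ≤ a := div_nonneg (norm_nonneg x) hε.le
  have hab : a ≤ b := div_le_div_of_nonneg_right hx hε.le
  have hca : 0 < Real.cosh a := Real.cosh_pos _
  have hcb : 0 < Real.cosh b := Real.cosh_pos _
  have hlog : Real.log (Real.cosh a / Real.cosh b)
      = Real.log (Real.cosh a) - Real.log (Real.cosh b) :=
    Real.log_div hca.ne' hcb.ne'
  -- lower bound: cosh b ≤ exp (b - a) * cosh a
  have hlow : Real.cosh b ≤ Real.exp (b - a) * Real.cosh a := by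
    rw [Real.cosh_eq, Real.cosh_eq]
    have h1 : Real.exp (-b) ≤ Real.exp (b - 2 * a) := by
      apply Real.exp_le_exp.mpr; linarith
    have h2 : Real.exp (b - a) * Real.exp a = Real.exp b := by
      rw [← Real.exp_add]; ring_nf
    have h3 : Real.exp (b - a) * Real.exp (-a) = Real.exp (b - 2 * a) := by
      rw [← Real.exp_add]; ring_nf
    nlinarith [Real.exp_pos b, Real.exp_pos (-b)]
  have hlow' : Real.log (Real.cosh b) ≤ (b - a) + Real.log (Real.cosh a) := by
    have := Real.log_le_log hcb hlow
    rwa [Real.log_mul (Real.exp_pos _).ne' hca.ne', Real.log_exp] at this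
  -- upper bounds
  have hup1 : Real.log (Real.cosh a) ≤ a := by
    have h1 : Real.cosh a ≤ Real.exp a := by
      rw [Real.cosh_eq]
      have : Real.exp (-a) ≤ Real.exp a := Real.exp_le_exp.mpr (by linarith)
      linarith
    calc Real.log (Real.cosh a) ≤ Real.log (Real.exp a) := Real.log_le_log hca h1
      _ = a := Real.log_exp a
  have hup2 : b - Real.log 2 ≤ Real.log (Real.cosh b) := by
    have h1 : Real.exp b ≤ 2 * Real.cosh b := by
      rw [Real.cosh_eq]
      have := (Real.exp_pos (-b)).le
      linarith
    have := Real.log_le_log (Real.exp_pos b) h1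
    rw [Real.log_exp, Real.log_mul two_ne_zero hcb.ne'] at this
    linarith
  have haε : ε * a = ‖x‖ := by rw [ha_def]; field_simp [hε.ne']
  have hbε : ε * b = R := by rw [hb_def]; field_simp [hε.ne']
  constructor
  · rw [hlog]
    nlinarith [mul_le_mul_of_nonneg_left (sub_le_iff_le_add.mpr hlow') hε.le]
  · rw [hlog]
    have : Real.log (Real.cosh a) - Real.log (Real.cosh b) ≤ a - b + Real.log 2 := by
      linarith
    nlinarith [mul_le_mul_of_nonneg_left this hε.le]
end

section
/- Let p ∈ (1,∞), α = (N-p)/(p-1), and for R' > R > 0 define on the annulus {R ≤ |x| ≤ R'} the function u^ε(x) = (∫₀^∞ e^{-√(p')|x|cosh θ/ε}(sinh θ)^α dθ)/(∫₀^∞ e^{-√(p') R cosh θ/ε}(sinh θ)^α dθ). Then ε log u^ε(x) + √(p')(|x| − R) = O(ε) uniformly for R ≤ |x| ≤ R' as ε → 0⁺. -/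
open Real MeasureTheory Set Filter

namespace Stmt10Aux

lemma sinh_le_mul_exp {θ : ℝ} (hθ : 0 ≤ θ) : Real.sinh θ ≤ θ * Real.exp θ := by
  have h1 := Real.add_one_le_exp (-(2*θ))
  have h3 : 0 < Real.exp θ := Real.exp_pos θ
  have h5 : (Real.exp θ)⁻¹ = Real.exp (-(2*θ)) * Real.exp θ := by
    rw [← Real.exp_add, ← Real.exp_neg]; congr 1; ring
  rw [Real.sinh_eq, Real.exp_neg]
  rw [h5]
  nlinarith [h1, h3]

lemma cosh_eq_one_add (θ : ℝ) : Real.cosh θ = 1 + 2 * Real.sinh (θ/2)^2 := by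
  have h := Real.cosh_two_mul (θ/2)
  have h2 : 2*(θ/2) = θ := by ring
  rw [h2] at h
  rw [h, Real.cosh_sq]; ring

lemma one_add_sq_le_cosh {θ : ℝ} (hθ : 0 ≤ θ) : 1 + θ^2/2 ≤ Real.cosh θ := by
  rw [cosh_eq_one_add]
  have h : θ/2 ≤ Real.sinh (θ/2) := Real.self_le_sinh_iff.mpr (by linarith)
  nlinarith [h, hθ]

lemma cosh_le_one_add {θ : ℝ} (h0 : 0 ≤ θ) (h1 : θ ≤ 1) : Real.cosh θ ≤ 1 + 2*θ^2 := by
  rw [cosh_eq_one_add]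
  have hs := sinh_le_mul_exp (θ := θ/2) (by linarith)
  have hsn : 0 ≤ Real.sinh (θ/2) := Real.sinh_nonneg_iff.mpr (by linarith)
  have hsq : Real.exp (1/2) * Real.exp (1/2) = Real.exp 1 := by
    rw [← Real.exp_add]; norm_num
  have hhalf : Real.exp (1/2:ℝ) ≤ 2 := by
    nlinarith [Real.exp_pos (1/2:ℝ), Real.exp_one_lt_d9]
  have he : Real.exp (θ/2) ≤ 2 :=
    le_trans (Real.exp_le_exp.mpr (by linarith)) hhalf
  have h2 : Real.sinh (θ/2) ≤ θ := by nlinarith [hs, he, h0]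
  nlinarith [h2, hsn]

lemma rpow_aux_le {α θ : ℝ} (h0 : 0 < θ) (h1 : θ ≤ 1) :
    Real.sinh θ ^ α ≤ Real.exp |α| * θ ^ α := by
  rcases le_or_gt 0 α with h | h
  · have h2 : Real.sinh θ ^ α ≤ (θ * Real.exp θ) ^ α :=
      Real.rpow_le_rpow (Real.sinh_nonneg_iff.mpr h0.le) (sinh_le_mul_exp h0.le) h
    have h3 : (θ * Real.exp θ) ^ α = Real.exp (θ * α) * θ ^ α := by
      rw [Real.mul_rpow h0.le (Real.exp_pos θ).le, ← Real.exp_mul]; ring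
    have h4 : Real.exp (θ * α) ≤ Real.exp |α| :=
      Real.exp_le_exp.mpr (by rw [abs_of_nonneg h]; nlinarith)
    have h5 : (0:ℝ) < θ ^ α := Real.rpow_pos_of_pos h0 α
    rw [h3] at h2
    nlinarith [h2, h4, h5]
  · have h2 : Real.sinh θ ^ α ≤ θ ^ α :=
      Real.rpow_le_rpow_of_nonpos h0 (Real.self_le_sinh_iff.mpr h0.le) h.le
    have h3 : (1:ℝ) ≤ Real.exp |α| := Real.one_le_exp (abs_nonneg α)
    nlinarith [Real.rpow_pos_of_pos h0 α]

lemma rpow_aux_ge {α θ : ℝ} (h0 : 0 < θ) (h1 : θ ≤ 1) :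
    Real.exp (-|α|) * θ ^ α ≤ Real.sinh θ ^ α := by
  rcases le_or_gt 0 α with h | h
  · have h2 : θ ^ α ≤ Real.sinh θ ^ α :=
      Real.rpow_le_rpow h0.le (Real.self_le_sinh_iff.mpr h0.le) h
    have h3 : Real.exp (-|α|) ≤ 1 := by
      calc Real.exp (-|α|) ≤ Real.exp 0 := Real.exp_le_exp.mpr (by simp [abs_nonneg])
        _ = 1 := Real.exp_zero
    nlinarith [Real.rpow_pos_of_pos h0 α, Real.exp_pos (-|α|)]
  · have hx : 0 < Real.sinh θ := Real.sinh_pos_iff.mpr h0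
    have h2 : (θ * Real.exp θ) ^ α ≤ Real.sinh θ ^ α :=
      Real.rpow_le_rpow_of_nonpos hx (sinh_le_mul_exp h0.le) h.le
    have h3 : (θ * Real.exp θ) ^ α = Real.exp (θ * α) * θ ^ α := by
      rw [Real.mul_rpow h0.le (Real.exp_pos θ).le, ← Real.exp_mul]; ring
    have h4 : Real.exp (-|α|) ≤ Real.exp (θ * α) :=
      Real.exp_le_exp.mpr (by rw [abs_of_neg h]; nlinarith)
    have h5 : (0:ℝ) < θ ^ α := Real.rpow_pos_of_pos h0 α
    rw [h3] at h2
    nlinarith [h2, h4, h5]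

lemma rpow_aux_tail {α θ : ℝ} (h1 : 1 ≤ θ) : Real.sinh θ ^ α ≤ Real.exp (|α| * θ) := by
  rcases le_or_gt 0 α with h | h
  · have hc : Real.cosh θ ≤ Real.exp θ := by
      rw [Real.cosh_eq]
      nlinarith [Real.exp_le_exp.mpr (by linarith : -θ ≤ θ)]
    have hs : Real.sinh θ ≤ Real.exp θ := le_trans (Real.sinh_lt_cosh θ).le hc
    have h2 : Real.sinh θ ^ α ≤ (Real.exp θ) ^ α :=
      Real.rpow_le_rpow (Real.sinh_nonneg_iff.mpr (by linarith)) hs h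
    have h3 : (Real.exp θ) ^ α = Real.exp (θ * α) := (Real.exp_mul θ α).symm
    rw [h3] at h2
    exact le_trans h2 (Real.exp_le_exp.mpr (by rw [abs_of_nonneg h]; nlinarith))
  · have hs1 : (1:ℝ) ≤ Real.sinh θ :=
      le_trans (Real.self_le_sinh_iff.mpr zero_le_one) (Real.sinh_le_sinh.mpr h1)
    exact le_trans (Real.rpow_le_one_of_one_le_of_nonpos hs1 h.le)
      (Real.one_le_exp (by positivity))

lemma meas_aux (α s : ℝ) :
    Measurable fun θ : ℝ => Real.exp (-(s * Real.cosh θ)) * Real.sinh θ ^ α := by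
  fun_prop

lemma F_nonneg (α s : ℝ) {θ : ℝ} (hθ : 0 ≤ θ) :
    0 ≤ Real.exp (-(s * Real.cosh θ)) * Real.sinh θ ^ α :=
  mul_nonneg (Real.exp_pos _).le (Real.rpow_nonneg (Real.sinh_nonneg_iff.mpr hθ) α)

lemma integrableOn_F {α : ℝ} (hα : -1 < α) {s : ℝ} (hs : 4*|α| + 8 ≤ s) :
    IntegrableOn (fun θ => Real.exp (-(s * Real.cosh θ)) * Real.sinh θ ^ α) (Ioi (0:ℝ)) := by
  have habs : (0:ℝ) ≤ |α| := abs_nonneg α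
  have hs0 : (0:ℝ) < s := by linarith
  have hmeas := meas_aux α s
  have hpart1 : IntegrableOn (fun θ => Real.exp (-(s * Real.cosh θ)) * Real.sinh θ ^ α)
      (Ioc (0:ℝ) 1) := by
    have hbound : IntegrableOn (fun θ : ℝ => Real.exp |α| * θ ^ α) (Ioc (0:ℝ) 1) :=
      ((intervalIntegral.intervalIntegrable_rpow' hα (a := 0) (b := 1)).1).const_mul _
    refine Integrable.mono' hbound hmeas.aestronglyMeasurable.restrict ?_
    filter_upwards [ae_restrict_mem measurableSet_Ioc] with θ hθ
    rw [Real.norm_eq_abs, abs_of_nonneg (F_nonneg α s hθ.1.le)]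
    have h1 : Real.exp (-(s * Real.cosh θ)) ≤ 1 := by
      rw [Real.exp_le_one_iff]
      have := Real.cosh_pos (x := θ)
      nlinarith
    have h2 := rpow_aux_le (α := α) hθ.1 hθ.2
    have h3 : (0:ℝ) ≤ Real.sinh θ ^ α := Real.rpow_nonneg (Real.sinh_nonneg_iff.mpr hθ.1.le) α
    nlinarith [h1, h2, h3]
  have hpart2 : IntegrableOn (fun θ => Real.exp (-(s * Real.cosh θ)) * Real.sinh θ ^ α)
      (Ioi (1:ℝ)) := by
    have hbound : IntegrableOn (fun θ : ℝ => Real.exp (-(s - |α|) * θ)) (Ioi (1:ℝ)) :=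
      exp_neg_integrableOn_Ioi 1 (by linarith)
    refine Integrable.mono' hbound hmeas.aestronglyMeasurable.restrict ?_
    filter_upwards [ae_restrict_mem measurableSet_Ioi] with θ hθ
    rw [mem_Ioi] at hθ
    rw [Real.norm_eq_abs, abs_of_nonneg (F_nonneg α s (by linarith : (0:ℝ) ≤ θ))]
    have hθ0 : (0:ℝ) < θ := by linarith
    have hcosh : θ ≤ Real.cosh θ :=
      le_trans (Real.self_le_sinh_iff.mpr hθ0.le) (Real.sinh_lt_cosh θ).le
    have h1 : Real.exp (-(s * Real.cosh θ)) ≤ Real.exp (-(s * θ)) := by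
      apply Real.exp_le_exp.mpr; nlinarith
    have h2 := rpow_aux_tail (α := α) hθ.le
    have h4 : Real.exp (-(s*θ)) * Real.exp (|α| * θ) = Real.exp (-(s - |α|) * θ) := by
      rw [← Real.exp_add]; congr 1; ring
    calc Real.exp (-(s * Real.cosh θ)) * Real.sinh θ ^ α
        ≤ Real.exp (-(s*θ)) * Real.exp (|α| * θ) := by
          apply mul_le_mul h1 h2 (Real.rpow_nonneg (Real.sinh_nonneg_iff.mpr hθ0.le) α)
            (Real.exp_pos _).le
      _ = Real.exp (-(s - |α|) * θ) := h4
  have hset : Ioc (0:ℝ) 1 ∪ Ioi 1 = Ioi 0 := Ioc_union_Ioi_eq_Ioi zero_le_one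
  rw [← hset]
  exact hpart1.union hpart2

noncomputable def Iint (α s : ℝ) : ℝ :=
  ∫ θ in Ioi (0:ℝ), Real.exp (-(s * Real.cosh θ)) * Real.sinh θ ^ α

lemma upper {α : ℝ} (hα : -1 < α) : ∃ c₂ : ℝ, 0 < c₂ ∧ ∀ s : ℝ, 4*|α| + 8 ≤ s →
    Iint α s ≤ c₂ * (Real.exp (-s) * s ^ (-((α+1)/2))) := by
  have habs : (0:ℝ) ≤ |α| := abs_nonneg α
  set β := (α+1)/2 with hβdef
  have hβ : 0 < β := by rw [hβdef]; linarith
  set n := ⌈β⌉₊ with hn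
  refine ⟨Real.exp (|α|) * ((2:ℝ)^β * (Real.Gamma β / 2)) + ((Nat.factorial n : ℕ) : ℝ) * 8^n, ?_, ?_⟩
  · have := Real.Gamma_pos_of_pos hβ
    positivity
  intro s hs
  have hs0 : (0:ℝ) < s := by linarith
  have hs1 : (1:ℝ) ≤ s := by linarith
  have hInt := integrableOn_F hα hs
  have hIoc : IntegrableOn (fun θ => Real.exp (-(s * Real.cosh θ)) * Real.sinh θ ^ α)
      (Ioc (0:ℝ) 1) := hInt.mono_set Ioc_subset_Ioi_self
  have hIoi1 : IntegrableOn (fun θ => Real.exp (-(s * Real.cosh θ)) * Real.sinh θ ^ α)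
      (Ioi (1:ℝ)) := hInt.mono_set (Ioi_subset_Ioi zero_le_one)
  have hsplit : Iint α s = (∫ θ in Ioc (0:ℝ) 1, Real.exp (-(s * Real.cosh θ)) * Real.sinh θ ^ α)
      + ∫ θ in Ioi (1:ℝ), Real.exp (-(s * Real.cosh θ)) * Real.sinh θ ^ α := by
    rw [Iint, ← Ioc_union_Ioi_eq_Ioi (zero_le_one (α := ℝ)),
      setIntegral_union Ioc_disjoint_Ioi_same measurableSet_Ioi hIoc hIoi1]
  -- Gaussian integral
  have hG : IntegrableOn (fun θ : ℝ => θ ^ α * Real.exp (-(s/2) * θ^2)) (Ioi (0:ℝ)) :=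
    integrableOn_rpow_mul_exp_neg_mul_sq (by positivity) hα
  have hGval : ∫ θ in Ioi (0:ℝ), θ ^ α * Real.exp (-(s/2) * θ^2)
      = (s/2)^(-β) * (1/2) * Real.Gamma β := by
    have h2 : ∀ x : ℝ, x ^ (2:ℝ) = x ^ (2:ℕ) := fun x => by
      rw [show (2:ℝ) = ((2:ℕ):ℝ) by norm_num, Real.rpow_natCast]
    have hv := integral_rpow_mul_exp_neg_mul_rpow (p := 2) (q := α) (b := s/2) two_pos hα
      (by positivity)
    simp_rw [h2] at hv
    rw [show (fun θ : ℝ => θ ^ α * Real.exp (-(s/2) * θ^2)) = fun θ : ℝ =>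
      θ ^ α * Real.exp (-(s/2) * θ^(2:ℕ)) from rfl] at *
    rw [hv, show -(α+1)/(2:ℝ) = -β by rw [hβdef]; ring, show (α+1)/(2:ℝ) = β from hβdef.symm]
  -- P1
  have hpt1 : ∀ θ ∈ Ioc (0:ℝ) 1, Real.exp (-(s * Real.cosh θ)) * Real.sinh θ ^ α
      ≤ (Real.exp (-s) * Real.exp |α|) * (θ ^ α * Real.exp (-(s/2) * θ^2)) := by
    intro θ hθ
    have e1 : Real.exp (-(s * Real.cosh θ)) ≤ Real.exp (-s) * Real.exp (-(s/2) * θ^2) := by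
      rw [← Real.exp_add]
      apply Real.exp_le_exp.mpr
      have := one_add_sq_le_cosh hθ.1.le
      nlinarith [hs0]
    have e2 := rpow_aux_le (α := α) hθ.1 hθ.2
    have e3 : (0:ℝ) ≤ Real.sinh θ ^ α :=
      Real.rpow_nonneg (Real.sinh_nonneg_iff.mpr hθ.1.le) α
    calc Real.exp (-(s * Real.cosh θ)) * Real.sinh θ ^ α
        ≤ (Real.exp (-s) * Real.exp (-(s/2) * θ^2)) * (Real.exp |α| * θ ^ α) :=
          mul_le_mul e1 e2 e3 (by positivity)
      _ = (Real.exp (-s) * Real.exp |α|) * (θ ^ α * Real.exp (-(s/2) * θ^2)) := by ring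
  have hP1 : (∫ θ in Ioc (0:ℝ) 1, Real.exp (-(s * Real.cosh θ)) * Real.sinh θ ^ α)
      ≤ (Real.exp (-s) * Real.exp |α|) * ((s/2)^(-β) * (1/2) * Real.Gamma β) := by
    have step1 : (∫ θ in Ioc (0:ℝ) 1, Real.exp (-(s * Real.cosh θ)) * Real.sinh θ ^ α)
        ≤ ∫ θ in Ioc (0:ℝ) 1,
            (Real.exp (-s) * Real.exp |α|) * (θ ^ α * Real.exp (-(s/2) * θ^2)) :=
      setIntegral_mono_on hIoc ((hG.mono_set Ioc_subset_Ioi_self).const_mul _)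
        measurableSet_Ioc hpt1
    have step2 : (∫ θ in Ioc (0:ℝ) 1,
          (Real.exp (-s) * Real.exp |α|) * (θ ^ α * Real.exp (-(s/2) * θ^2)))
        ≤ ∫ θ in Ioi (0:ℝ),
            (Real.exp (-s) * Real.exp |α|) * (θ ^ α * Real.exp (-(s/2) * θ^2)) := by
      refine setIntegral_mono_set (hG.const_mul _) ?_
        (HasSubset.Subset.eventuallyLE Ioc_subset_Ioi_self)
      filter_upwards [ae_restrict_mem measurableSet_Ioi] with θ hθ
      have : (0:ℝ) ≤ θ ^ α := Real.rpow_nonneg (le_of_lt hθ) α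
      positivity
    calc (∫ θ in Ioc (0:ℝ) 1, Real.exp (-(s * Real.cosh θ)) * Real.sinh θ ^ α)
        ≤ _ := step1
      _ ≤ _ := step2
      _ = (Real.exp (-s) * Real.exp |α|) * ((s/2)^(-β) * (1/2) * Real.Gamma β) := by
          rw [integral_const_mul, hGval]
  -- P2
  have hpt2 : ∀ θ ∈ Ioi (1:ℝ), Real.exp (-(s * Real.cosh θ)) * Real.sinh θ ^ α
      ≤ (Real.exp (-s) * Real.exp (-(s/8))) * Real.exp (-θ) := by
    intro θ hθ
    rw [mem_Ioi] at hθ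
    have hθ0 : (0:ℝ) < θ := by linarith
    have hcosh := one_add_sq_le_cosh hθ0.le
    have e2 := rpow_aux_tail (α := α) hθ.le
    have hθsq : θ ≤ θ^2 := by nlinarith
    have hc : s/8 ≤ s/2 - 1 - |α| := by linarith
    have hθc : s/2 - 1 - |α| ≤ θ * (s/2 - 1 - |α|) :=
      le_mul_of_one_le_left (by linarith) hθ.le
    have key : -(s * Real.cosh θ) + |α| * θ ≤ -s + -(s/8) + -θ := by
      nlinarith [mul_le_mul_of_nonneg_left hcosh hs0.le,
        mul_le_mul_of_nonneg_left hθsq (by linarith : (0:ℝ) ≤ s/2), hθc, hc]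
    calc Real.exp (-(s * Real.cosh θ)) * Real.sinh θ ^ α
        ≤ Real.exp (-(s * Real.cosh θ)) * Real.exp (|α| * θ) :=
          mul_le_mul_of_nonneg_left e2 (Real.exp_pos _).le
      _ = Real.exp (-(s * Real.cosh θ) + |α| * θ) := (Real.exp_add _ _).symm
      _ ≤ Real.exp (-s + -(s/8) + -θ) := Real.exp_le_exp.mpr key
      _ = (Real.exp (-s) * Real.exp (-(s/8))) * Real.exp (-θ) := by
          rw [Real.exp_add, Real.exp_add]
  have hExpInt : IntegrableOn (fun θ : ℝ =>
      (Real.exp (-s) * Real.exp (-(s/8))) * Real.exp (-θ)) (Ioi (1:ℝ)) := by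
    have h := exp_neg_integrableOn_Ioi 1 (one_pos (α := ℝ))
    simp only [neg_one_mul] at h
    exact h.const_mul _
  have hP2 : (∫ θ in Ioi (1:ℝ), Real.exp (-(s * Real.cosh θ)) * Real.sinh θ ^ α)
      ≤ Real.exp (-s) * Real.exp (-(s/8)) := by
    have hle1 : Real.exp (-(1:ℝ)) ≤ 1 := by
      rw [Real.exp_le_one_iff]; norm_num
    calc (∫ θ in Ioi (1:ℝ), Real.exp (-(s * Real.cosh θ)) * Real.sinh θ ^ α)
        ≤ ∫ θ in Ioi (1:ℝ), (Real.exp (-s) * Real.exp (-(s/8))) * Real.exp (-θ) :=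
          setIntegral_mono_on hIoi1 hExpInt measurableSet_Ioi hpt2
      _ = (Real.exp (-s) * Real.exp (-(s/8))) * ∫ θ in Ioi (1:ℝ), Real.exp (-θ) :=
          integral_const_mul _ _
      _ = (Real.exp (-s) * Real.exp (-(s/8))) * Real.exp (-1) := by
          rw [integral_exp_neg_Ioi]
      _ ≤ (Real.exp (-s) * Real.exp (-(s/8))) * 1 := by
          apply mul_le_mul_of_nonneg_left hle1 (by positivity)
      _ = Real.exp (-s) * Real.exp (-(s/8)) := mul_one _
  -- exp decay beats power
  have hfac : (0:ℝ) < ((Nat.factorial n : ℕ) : ℝ) := by exact_mod_cast Nat.factorial_pos n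
  have hexp8 : Real.exp (-(s/8)) ≤ ((Nat.factorial n : ℕ) : ℝ) * 8^n * s^(-β) := by
    have h1 : (s/8)^n / ((Nat.factorial n : ℕ) : ℝ) ≤ Real.exp (s/8) := Real.pow_div_factorial_le_exp (x := s/8) (by positivity) n
    have h3 : (0:ℝ) < (s/8)^n := by positivity
    have h4 : Real.exp (-(s/8)) ≤ ((Nat.factorial n : ℕ) : ℝ) / (s/8)^n := by
      rw [le_div_iff₀ h3]
      have h5 : Real.exp (-(s/8)) * Real.exp (s/8) = 1 := by
        rw [← Real.exp_add]; simp
      calc Real.exp (-(s/8)) * (s/8)^n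
          ≤ Real.exp (-(s/8)) * (((Nat.factorial n : ℕ) : ℝ) * Real.exp (s/8)) := by
            apply mul_le_mul_of_nonneg_left _ (Real.exp_pos _).le
            rw [div_le_iff₀ hfac] at h1; linarith
        _ = ((Nat.factorial n : ℕ) : ℝ) * (Real.exp (-(s/8)) * Real.exp (s/8)) := by ring
        _ = ((Nat.factorial n : ℕ) : ℝ) := by rw [h5, mul_one]
    have h6 : ((Nat.factorial n : ℕ) : ℝ) / (s/8)^n = ((Nat.factorial n : ℕ) : ℝ) * 8^n * s^(-(n:ℝ)) := by
      rw [div_pow, Real.rpow_neg hs0.le, Real.rpow_natCast]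
      field_simp
    have h7 : s^(-(n:ℝ)) ≤ s^(-β) :=
      Real.rpow_le_rpow_of_exponent_le hs1 (neg_le_neg (Nat.le_ceil β))
    calc Real.exp (-(s/8)) ≤ ((Nat.factorial n : ℕ) : ℝ) / (s/8)^n := h4
      _ = ((Nat.factorial n : ℕ) : ℝ) * 8^n * s^(-(n:ℝ)) := h6
      _ ≤ ((Nat.factorial n : ℕ) : ℝ) * 8^n * s^(-β) := by
          apply mul_le_mul_of_nonneg_left h7 (by positivity)
  have h2β : (s/2)^(-β) = s^(-β) * 2^β := by
    rw [div_eq_mul_inv, Real.mul_rpow hs0.le (by norm_num),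
      Real.inv_rpow (by norm_num : (0:ℝ) ≤ 2), Real.rpow_neg (by norm_num : (0:ℝ) ≤ 2), inv_inv]
  calc Iint α s = _ := hsplit
    _ ≤ (Real.exp (-s) * Real.exp |α|) * ((s/2)^(-β) * (1/2) * Real.Gamma β)
        + Real.exp (-s) * Real.exp (-(s/8)) := add_le_add hP1 hP2
    _ ≤ (Real.exp (-s) * Real.exp |α|) * ((s/2)^(-β) * (1/2) * Real.Gamma β)
        + Real.exp (-s) * (((Nat.factorial n : ℕ) : ℝ) * 8^n * s^(-β)) := by
        have := mul_le_mul_of_nonneg_left hexp8 (Real.exp_pos (-s)).le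
        linarith
    _ = (Real.exp |α| * ((2:ℝ)^β * (Real.Gamma β / 2)) + ((Nat.factorial n : ℕ) : ℝ) * 8^n)
        * (Real.exp (-s) * s^(-β)) := by
        rw [h2β]; ring

lemma lower {α : ℝ} (hα : -1 < α) : ∃ c₁ : ℝ, 0 < c₁ ∧ ∀ s : ℝ, 4*|α| + 8 ≤ s →
    c₁ * (Real.exp (-s) * s ^ (-((α+1)/2))) ≤ Iint α s := by
  have habs : (0:ℝ) ≤ |α| := abs_nonneg α
  have hα1 : (0:ℝ) < α + 1 := by linarith
  refine ⟨Real.exp (-(2+|α|)) / (α+1), by positivity, ?_⟩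
  intro s hs
  have hs0 : (0:ℝ) < s := by linarith
  have hs1 : (1:ℝ) ≤ s := by linarith
  have hInt := integrableOn_F hα hs
  set t : ℝ := s ^ (-(1/2 : ℝ)) with htdef
  have ht0 : 0 < t := Real.rpow_pos_of_pos hs0 _
  have ht1 : t ≤ 1 := Real.rpow_le_one_of_one_le_of_nonpos hs1 (by norm_num)
  have ht2 : t^2 = s⁻¹ := by
    rw [htdef, ← Real.rpow_natCast (s ^ (-(1/2:ℝ))) 2, ← Real.rpow_mul hs0.le]
    norm_num [Real.rpow_neg_one]
  have htpow : t ^ (α+1) = s ^ (-((α+1)/2)) := by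
    rw [htdef, ← Real.rpow_mul hs0.le]
    congr 1; ring
  -- pointwise lower bound on (0, t]
  have hpt : ∀ θ ∈ Ioc (0:ℝ) t,
      (Real.exp (-s) * (Real.exp (-2) * Real.exp (-|α|))) * θ ^ α
        ≤ Real.exp (-(s * Real.cosh θ)) * Real.sinh θ ^ α := by
    intro θ hθ
    have hθ0 : 0 < θ := hθ.1
    have hθt : θ ≤ t := hθ.2
    have hθ1 : θ ≤ 1 := le_trans hθt ht1
    have hsq : s * θ^2 ≤ 1 := by
      have h1 : θ^2 ≤ t^2 := by nlinarith
      have h2 : s * θ^2 ≤ s * t^2 := by nlinarith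
      rw [ht2] at h2
      rw [mul_inv_cancel₀ hs0.ne'] at h2
      exact h2
    have e1 : Real.exp (-s) * Real.exp (-2) ≤ Real.exp (-(s * Real.cosh θ)) := by
      rw [← Real.exp_add]
      apply Real.exp_le_exp.mpr
      have := cosh_le_one_add hθ0.le hθ1
      nlinarith [hs0]
    have e2 := rpow_aux_ge (α := α) hθ0 hθ1
    have e3 : (0:ℝ) ≤ θ ^ α := (Real.rpow_pos_of_pos hθ0 α).le
    calc (Real.exp (-s) * (Real.exp (-2) * Real.exp (-|α|))) * θ ^ α
        = (Real.exp (-s) * Real.exp (-2)) * (Real.exp (-|α|) * θ ^ α) := by ring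
      _ ≤ Real.exp (-(s * Real.cosh θ)) * Real.sinh θ ^ α :=
          mul_le_mul e1 e2 (by positivity) (Real.exp_pos _).le
  have hIoct : IntegrableOn (fun θ => Real.exp (-(s * Real.cosh θ)) * Real.sinh θ ^ α)
      (Ioc (0:ℝ) t) := hInt.mono_set Ioc_subset_Ioi_self
  have hrpowInt : IntegrableOn (fun θ : ℝ =>
      (Real.exp (-s) * (Real.exp (-2) * Real.exp (-|α|))) * θ ^ α) (Ioc (0:ℝ) t) :=
    ((intervalIntegral.intervalIntegrable_rpow' hα (a := 0) (b := t)).1).const_mul _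
  have hval : ∫ θ in Ioc (0:ℝ) t, θ ^ α = t ^ (α+1) / (α+1) := by
    have h := integral_rpow (a := 0) (b := t) (Or.inl hα)
    rw [intervalIntegral.integral_of_le ht0.le] at h
    rw [h, Real.zero_rpow (by linarith : α + 1 ≠ 0)]
    ring
  have step1 : Real.exp (-(2+|α|)) / (α+1) * (Real.exp (-s) * s ^ (-((α+1)/2)))
      = ∫ θ in Ioc (0:ℝ) t,
          (Real.exp (-s) * (Real.exp (-2) * Real.exp (-|α|))) * θ ^ α := by
    rw [integral_const_mul, hval, htpow, show Real.exp (-(2+|α|)) = Real.exp (-2) * Real.exp (-|α|)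
      by rw [← Real.exp_add]; congr 1; ring]
    ring
  have step2 : (∫ θ in Ioc (0:ℝ) t,
        (Real.exp (-s) * (Real.exp (-2) * Real.exp (-|α|))) * θ ^ α)
      ≤ ∫ θ in Ioc (0:ℝ) t, Real.exp (-(s * Real.cosh θ)) * Real.sinh θ ^ α :=
    setIntegral_mono_on hrpowInt hIoct measurableSet_Ioc hpt
  have step3 : (∫ θ in Ioc (0:ℝ) t, Real.exp (-(s * Real.cosh θ)) * Real.sinh θ ^ α)
      ≤ Iint α s := by
    refine setIntegral_mono_set hInt ?_ (HasSubset.Subset.eventuallyLE Ioc_subset_Ioi_self)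
    filter_upwards [ae_restrict_mem measurableSet_Ioi] with θ hθ
    exact mul_nonneg (Real.exp_pos _).le (Real.rpow_nonneg (Real.sinh_nonneg_iff.mpr hθ.le) α)
  rw [step1]
  exact le_trans step2 step3

lemma main_est {α c₁ c₂ : ℝ} (hα : -1 < α) (hc₁ : 0 < c₁) (hc₂ : 0 < c₂)
    (hlow : ∀ s : ℝ, 4*|α| + 8 ≤ s → c₁ * (Real.exp (-s) * s ^ (-((α+1)/2))) ≤ Iint α s)
    (hupp : ∀ s : ℝ, 4*|α| + 8 ≤ s → Iint α s ≤ c₂ * (Real.exp (-s) * s ^ (-((α+1)/2))))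
    {s₁ s₂ M : ℝ} (h₂ : 4*|α| + 8 ≤ s₂) (h₁₂ : s₂ ≤ s₁) (hM : s₁/s₂ ≤ M) (hM1 : 1 ≤ M) :
    |Real.log (Iint α s₁ / Iint α s₂) + (s₁ - s₂)|
      ≤ |Real.log c₂ - Real.log c₁| + (α+1)/2 * Real.log M := by
  have habs : (0:ℝ) ≤ |α| := abs_nonneg α
  set β : ℝ := (α+1)/2 with hβdef
  have hβ : 0 < β := by rw [hβdef]; linarith
  have hs₂0 : 0 < s₂ := by linarith
  have hs₁0 : 0 < s₁ := lt_of_lt_of_le hs₂0 h₁₂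
  have h₁ : 4*|α| + 8 ≤ s₁ := le_trans h₂ h₁₂
  have hI₂pos : 0 < Iint α s₂ := lt_of_lt_of_le (by positivity) (hlow s₂ h₂)
  have hI₁pos : 0 < Iint α s₁ := lt_of_lt_of_le (by positivity) (hlow s₁ h₁)
  have hlog : ∀ s : ℝ, 4*|α| + 8 ≤ s →
      (Real.log c₁ - s - β * Real.log s ≤ Real.log (Iint α s) ∧
       Real.log (Iint α s) ≤ Real.log c₂ - s - β * Real.log s) := by
    intro s hs
    have hs0 : (0:ℝ) < s := by linarith
    have hIpos : 0 < Iint α s := lt_of_lt_of_le (by positivity) (hlow s hs)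
    have hval : ∀ c : ℝ, 0 < c → Real.log (c * (Real.exp (-s) * s ^ (-β)))
        = Real.log c - s - β * Real.log s := by
      intro c hc
      rw [Real.log_mul hc.ne' (by positivity),
        Real.log_mul (Real.exp_ne_zero _) (by positivity : s ^ (-β) ≠ 0),
        Real.log_exp, Real.log_rpow hs0]
      ring
    constructor
    · rw [← hval c₁ hc₁]
      exact (Real.log_le_log_iff (by positivity) hIpos).mpr (hlow s hs)
    · rw [← hval c₂ hc₂]
      exact (Real.log_le_log_iff hIpos (by positivity)).mpr (hupp s hs)
  obtain ⟨l₁, u₁⟩ := hlog s₁ h₁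
  obtain ⟨l₂, u₂⟩ := hlog s₂ h₂
  have hlogs : Real.log s₂ ≤ Real.log s₁ := (Real.log_le_log_iff hs₂0 hs₁0).mpr h₁₂
  have hlogM : Real.log s₁ - Real.log s₂ ≤ Real.log M := by
    rw [← Real.log_div hs₁0.ne' hs₂0.ne']
    exact (Real.log_le_log_iff (by positivity) (by linarith)).mpr hM
  have hlogM0 : 0 ≤ Real.log M := Real.log_nonneg hM1
  have habs2 := le_abs_self (Real.log c₂ - Real.log c₁)
  have habs3 := neg_abs_le (Real.log c₂ - Real.log c₁)
  have hmul1 : 0 ≤ β * (Real.log s₁ - Real.log s₂) := mul_nonneg hβ.le (by linarith)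
  have hmul2 : β * (Real.log s₁ - Real.log s₂) ≤ β * Real.log M :=
    mul_le_mul_of_nonneg_left hlogM hβ.le
  rw [Real.log_div hI₁pos.ne' hI₂pos.ne', abs_le]
  constructor <;> nlinarith [l₁, u₁, l₂, u₂]

end Stmt10Aux

open Stmt10Aux in
theorem stmt10 (N : ℕ) (hN : 2 ≤ N) (p R R' : ℝ) (hp : 1 < p) (hR : 0 < R) (hRR' : R < R')
    (α p' : ℝ) (hα : α = ((N : ℝ) - p) / (p - 1)) (hp' : p' = p / (p - 1))
    (u : ℝ → EuclideanSpace ℝ (Fin N) → ℝ)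
    (hu : ∀ (ε : ℝ) (x : EuclideanSpace ℝ (Fin N)), u ε x =
      (∫ θ in Ioi (0:ℝ),
          Real.exp (-(Real.sqrt p' * ‖x‖ * Real.cosh θ) / ε) * Real.sinh θ ^ α) /
      (∫ θ in Ioi (0:ℝ),
          Real.exp (-(Real.sqrt p' * R * Real.cosh θ) / ε) * Real.sinh θ ^ α)) :
    ∃ C ε₀ : ℝ, 0 < C ∧ 0 < ε₀ ∧
      ∀ (ε : ℝ) (x : EuclideanSpace ℝ (Fin N)), 0 < ε → ε < ε₀ →
        R ≤ ‖x‖ → ‖x‖ ≤ R' →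
        |ε * Real.log (u ε x) + Real.sqrt p' * (‖x‖ - R)| ≤ C * ε := by
  have hp1 : (0:ℝ) < p - 1 := by linarith
  have hp'pos : 0 < p' := by rw [hp']; positivity
  have ha : 0 < Real.sqrt p' := Real.sqrt_pos.mpr hp'pos
  have hα1 : -1 < α := by
    rw [hα, lt_div_iff₀ hp1]
    have h2 : (2:ℝ) ≤ (N:ℝ) := by exact_mod_cast hN
    linarith
  obtain ⟨c₁, hc₁, hlow⟩ := Stmt10Aux.lower hα1
  obtain ⟨c₂, hc₂, hupp⟩ := Stmt10Aux.upper hα1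
  have habs : (0:ℝ) ≤ |α| := abs_nonneg α
  have hs₀pos : (0:ℝ) < 4*|α| + 8 := by linarith
  set D : ℝ := |Real.log c₂ - Real.log c₁| + (α+1)/2 * Real.log (R'/R) with hD
  refine ⟨max D 1, Real.sqrt p' * R / (4*|α| + 8),
    lt_of_lt_of_le one_pos (le_max_right _ _), by positivity, ?_⟩
  intro ε x hε hεε₀ hxR hxR'
  have hr0 : 0 < ‖x‖ := lt_of_lt_of_le hR hxR
  have hs₂ : 4*|α| + 8 ≤ Real.sqrt p' * R / ε := by
    rw [le_div_iff₀ hε]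
    have := (lt_div_iff₀ hs₀pos).mp hεε₀
    nlinarith
  have hs₁₂ : Real.sqrt p' * R / ε ≤ Real.sqrt p' * ‖x‖ / ε := by gcongr
  have hM1 : (1:ℝ) ≤ R'/R := (one_le_div hR).mpr hRR'.le
  have hM : (Real.sqrt p' * ‖x‖ / ε) / (Real.sqrt p' * R / ε) ≤ R'/R := by
    have heq : (Real.sqrt p' * ‖x‖ / ε) / (Real.sqrt p' * R / ε) = ‖x‖ / R := by
      field_simp
    rw [heq]
    gcongr
  have hint : ∀ c : ℝ, (∫ θ in Ioi (0:ℝ),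
      Real.exp (-(Real.sqrt p' * c * Real.cosh θ) / ε) * Real.sinh θ ^ α)
      = Iint α (Real.sqrt p' * c / ε) := by
    intro c
    simp only [Iint]
    congr 1
    funext θ
    congr 2
    ring
  have hu' : u ε x = Iint α (Real.sqrt p' * ‖x‖ / ε) / Iint α (Real.sqrt p' * R / ε) := by
    rw [hu ε x, hint ‖x‖, hint R]
  have hest := main_est hα1 hc₁ hc₂ hlow hupp hs₂ hs₁₂ hM hM1
  have hdiff : ε * ((Real.sqrt p' * ‖x‖ / ε) - (Real.sqrt p' * R / ε))
      = Real.sqrt p' * (‖x‖ - R) := by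
    field_simp
  have hre : ε * Real.log (u ε x) + Real.sqrt p' * (‖x‖ - R)
      = ε * (Real.log (Iint α (Real.sqrt p' * ‖x‖ / ε) / Iint α (Real.sqrt p' * R / ε))
          + ((Real.sqrt p' * ‖x‖ / ε) - (Real.sqrt p' * R / ε))) := by
    rw [hu', ← hdiff]
    ring
  rw [hre, abs_mul, abs_of_pos hε]
  calc ε * |Real.log (Iint α (Real.sqrt p' * ‖x‖ / ε) / Iint α (Real.sqrt p' * R / ε))
        + ((Real.sqrt p' * ‖x‖ / ε) - (Real.sqrt p' * R / ε))|
      ≤ ε * D := by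
        apply mul_le_mul_of_nonneg_left _ hε.le
        exact hest
    _ ≤ ε * max D 1 := mul_le_mul_of_nonneg_left (le_max_left _ _) hε.le
    _ = max D 1 * ε := mul_comm _ _
end
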